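/- arXiv:0906.0720 — 3 statements merged into one kernel-verified Lean document; each statement's English description precedes it below -/
import Mathlib

section
/- For all n, all 0 ≤ m ≤ C(n,2) and all 0 ≤ ℓ ≤ C(n,2), with p := m/C(n,2), one has q(ℓ; n, m) ≤ (1 − p/2)^ℓ; that is, the probability in ⃗G(n,m) of avoiding ℓ fixed directed edges is at most the corresponding probability (1 − p/2)^ℓ in ⃗G(n,p). -/
open Filter Real

/-- Edges of the complete graph on `Fin n`: ordered pairs `(u,v)` with `u < v`. -/
abbrev Edge (n : ℕ) : Type := {e : Fin n × Fin n // e.1 < e.2}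

/-- A configuration of the random edge-orientation model: for each pair `u < v`,
`none` means no edge, `some true` means the directed edge `u → v`, and
`some false` means the directed edge `v → u`. -/
abbrev Config (n : ℕ) : Type := Edge n → Option Bool

/-- The directed edge relation determined by a configuration. -/
def DirEdge {n : ℕ} (f : Config n) (u v : Fin n) : Prop :=
  (∃ h : u < v, f ⟨(u, v), h⟩ = some true) ∨ (∃ h : v < u, f ⟨(v, u), h⟩ = some false)

/-- `Reaches f u v`: the configuration `f` contains a directed path from `u` to `v`
(paths of length `0` are allowed, so `Reaches f u u` always holds). -/
def Reaches {n : ℕ} (f : Config n) (u v : Fin n) : Prop :=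
  Relation.ReflTransGen (DirEdge f) u v

/-- The probability of an event under a weight function on a finite sample space. -/
noncomputable def prWeight {α : Type*} [Fintype α] (w : α → ℝ) (E : Set α) : ℝ :=
  ∑ x, E.indicator w x

/-- The weight of one edge state in `⃗G(n,p)`: no edge has probability `1 - p`
and each of the two orientations has probability `p/2`. -/
noncomputable def edgeWeight (p : ℝ) : Option Bool → ℝ
  | none => 1 - p
  | some _ => p / 2

/-- The probability of an event in the random directed graph `⃗G(n,p)`. -/
noncomputable def PrGnp (n : ℕ) (p : ℝ) (E : Set (Config n)) : ℝ :=
  prWeight (fun f => ∏ e : Edge n, edgeWeight p (f e)) E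

/-- The number of present edges of a configuration. -/
def edgeCount {n : ℕ} (f : Config n) : ℕ :=
  (Finset.univ.filter fun e : Edge n => (f e).isSome).card

/-- The probability of an event in the random directed graph `⃗G(n,m)`:
the underlying graph is uniform among the graphs with exactly `m` edges, and each
present edge is oriented in one of its two directions with probability `1/2`,
independently over edges. -/
noncomputable def PrGnm (n m : ℕ) (E : Set (Config n)) : ℝ :=
  prWeight (fun f => if edgeCount f = m
      then ((Nat.choose (Nat.choose n 2) m : ℝ) * 2 ^ m)⁻¹ else 0) E

section AuxProofs

open Finset

/-- `S a b m = ∑_{i+j=m} C(a,i) C(b,j) 2^j`. -/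
def Sq (a b m : ℕ) : ℕ := ∑ i ∈ range (m+1), a.choose i * (b.choose (m-i) * 2 ^ (m-i))

lemma Sq_zero (a b : ℕ) : Sq a b 0 = 1 := by simp [Sq]

lemma vand (a b m : ℕ) : ∑ i ∈ range (m+1), a.choose i * b.choose (m-i) = (a+b).choose m := by
  rw [Nat.add_choose_eq, Finset.Nat.sum_antidiagonal_eq_sum_range_succ_mk]

lemma bsum (a b m : ℕ) :
    ∑ i ∈ range (m+2), a.choose i * ((b+1).choose (m+1-i) * (m+1-i))
      = (b+1) * (a+b).choose m := by
  rw [Finset.sum_range_succ]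
  simp only [Nat.sub_self, Nat.choose_zero_right, mul_zero, mul_one, add_zero]
  have : ∀ i ∈ range (m+1), a.choose i * ((b+1).choose (m+1-i) * (m+1-i))
      = (b+1) * (a.choose i * b.choose (m-i)) := by
    intro i hi
    rw [mem_range] at hi
    have h1 : m + 1 - i = (m - i) + 1 := by omega
    have h2 := Nat.add_one_mul_choose_eq b (m-i)
    rw [h1, ← h2]
    ring
  rw [Finset.sum_congr rfl this, ← Finset.mul_sum, vand]

lemma wsum (a b m : ℕ) :
    ∑ i ∈ range (m+2), a.choose i * ((b+1).choose (m+1-i) * (m+1-i) * 2^(m+1-i))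
      = 2 * (b+1) * Sq a b m := by
  rw [Finset.sum_range_succ]
  simp only [Nat.sub_self, Nat.choose_zero_right, mul_zero, zero_mul, mul_one, add_zero]
  have : ∀ i ∈ range (m+1), a.choose i * ((b+1).choose (m+1-i) * (m+1-i) * 2^(m+1-i))
      = 2 * (b+1) * (a.choose i * (b.choose (m-i) * 2 ^ (m-i))) := by
    intro i hi
    rw [mem_range] at hi
    have h1 : m + 1 - i = (m - i) + 1 := by omega
    have h2 := Nat.add_one_mul_choose_eq b (m-i)
    rw [h1, ← h2, pow_succ]
    ring
  rw [Finset.sum_congr rfl this, ← Finset.mul_sum, Sq]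

lemma Sq_P1 (a b m : ℕ) : Sq (a+1) b (m+1) = Sq a b (m+1) + Sq a b m := by
  have L : Sq (a+1) b (m+1) = (∑ i ∈ range (m+1),
      (a.choose i + a.choose (i+1)) * (b.choose (m-i) * 2^(m-i))) + b.choose (m+1) * 2^(m+1) := by
    unfold Sq
    rw [Finset.sum_range_succ']
    congr 1
    · exact Finset.sum_congr rfl fun i _ => by rw [Nat.choose_succ_succ, Nat.succ_sub_succ]
    · simp
  have R : Sq a b (m+1) = (∑ i ∈ range (m+1),
      a.choose (i+1) * (b.choose (m-i) * 2^(m-i))) + b.choose (m+1) * 2^(m+1) := by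
    unfold Sq
    rw [Finset.sum_range_succ']
    congr 1
    · exact Finset.sum_congr rfl fun i _ => by rw [Nat.succ_sub_succ]
    · simp
  rw [L, R]
  unfold Sq
  simp only [add_mul, Finset.sum_add_distrib]
  ring

lemma Sq_P2 (a b m : ℕ) : Sq a (b+1) (m+1) = Sq a b (m+1) + 2 * Sq a b m := by
  have key : ∀ i ∈ range (m+1), a.choose i * ((b+1).choose (m+1-i) * 2^(m+1-i))
      = a.choose i * (b.choose (m+1-i) * 2^(m+1-i))
        + 2 * (a.choose i * (b.choose (m-i) * 2^(m-i))) := by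
    intro i hi
    rw [mem_range] at hi
    have h1 : m + 1 - i = (m - i) + 1 := by omega
    rw [h1, Nat.choose_succ_succ, pow_succ]
    ring
  unfold Sq
  conv_rhs => rw [Finset.sum_range_succ]
  rw [Finset.sum_range_succ, Finset.sum_congr rfl key, Finset.sum_add_distrib,
    ← Finset.mul_sum]
  simp only [Nat.sub_self, Nat.choose_zero_right, pow_zero, mul_one]
  ring

lemma Sq_R1 (a b m : ℕ) : Sq (a+1) b (m+1) + Sq a b m = Sq a (b+1) (m+1) := by
  rw [Sq_P1, Sq_P2]; ring

lemma Sq_star (a b m : ℕ) :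
    ((m+1) * (b+1) * Sq a (b+1) (m+1) : ℤ) ≤ (a+b+1) * (2 * (b+1) * Sq a b m) := by
  set N := a + b + 1 with hN
  set j0 : ℕ := ((m+1)*(b+1))/N with hj0
  set c : ℕ → ℤ := fun i => (a.choose i * (b+1).choose (m+1-i) : ℤ) with hc
  set h : ℕ → ℤ := fun i => (N:ℤ)*(m+1-i : ℕ) - (m+1)*(b+1) with hh
  have hNpos : 0 < N := by omega
  have key : ∀ i ∈ range (m+2), c i * 2^j0 * h i ≤ c i * 2^(m+1-i) * h i := by
    intro i _
    have hcnn : 0 ≤ c i := by positivity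
    rcases le_or_gt 0 (h i) with hpos | hneg
    · have hle : (m+1)*(b+1) ≤ N*(m+1-i) := by
        have := hpos
        simp only [hh, sub_nonneg] at this
        exact_mod_cast this
      have : j0 ≤ m+1-i := by
        calc j0 ≤ N*(m+1-i)/N := Nat.div_le_div_right hle
        _ = m+1-i := Nat.mul_div_cancel_left _ hNpos
      have h2 : (2:ℤ)^j0 ≤ 2^(m+1-i) := pow_le_pow_right₀ (by norm_num) this
      exact mul_le_mul_of_nonneg_right (mul_le_mul_of_nonneg_left h2 hcnn) hpos
    · have hle : N*(m+1-i) ≤ (m+1)*(b+1) := by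
        have := hneg
        simp only [hh, sub_neg] at this
        have := this.le
        exact_mod_cast this
      have : m+1-i ≤ j0 := by
        calc m+1-i = N*(m+1-i)/N := (Nat.mul_div_cancel_left _ hNpos).symm
        _ ≤ j0 := Nat.div_le_div_right hle
      have h2 : (2:ℤ)^(m+1-i) ≤ 2^j0 := pow_le_pow_right₀ (by norm_num) this
      exact mul_le_mul_of_nonpos_right (mul_le_mul_of_nonneg_left h2 hcnn) hneg.le
  have E1 : ∑ i ∈ range (m+2), c i * 2^(m+1-i) * ((N:ℤ)*(m+1-i : ℕ))
      = (N:ℤ) * (2*(b+1)*Sq a b m) := by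
    calc ∑ i ∈ range (m+2), c i * 2^(m+1-i) * ((N:ℤ)*(m+1-i : ℕ))
        = (N:ℤ) * ((∑ i ∈ range (m+2),
            a.choose i * ((b+1).choose (m+1-i) * (m+1-i) * 2^(m+1-i)) : ℕ) : ℤ) := by
          push_cast
          rw [Finset.mul_sum]
          exact Finset.sum_congr rfl fun i _ => by simp only [hc]; ring
      _ = (N:ℤ) * (2*(b+1)*Sq a b m) := by rw [wsum]; push_cast; ring
  have E2 : ∑ i ∈ range (m+2), c i * 2^(m+1-i) * (((m+1):ℤ)*(b+1))
      = ((m+1):ℤ)*(b+1) * Sq a (b+1) (m+1) := by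
    unfold Sq
    push_cast
    rw [Finset.mul_sum]
    exact Finset.sum_congr rfl fun i _ => by simp only [hc]; push_cast; ring
  have E3 : ∑ i ∈ range (m+2), c i * h i = 0 := by
    have hb : ∑ i ∈ range (m+2), c i * ((N:ℤ)*(m+1-i : ℕ))
        = (N:ℤ) * (((b+1) * (a+b).choose m : ℕ) : ℤ) := by
      calc ∑ i ∈ range (m+2), c i * ((N:ℤ)*(m+1-i : ℕ))
          = (N:ℤ) * ((∑ i ∈ range (m+2),
              a.choose i * ((b+1).choose (m+1-i) * (m+1-i)) : ℕ) : ℤ) := by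
            push_cast
            rw [Finset.mul_sum]
            exact Finset.sum_congr rfl fun i _ => by simp only [hc]; ring
        _ = _ := by rw [bsum]
    have hv : ∑ i ∈ range (m+2), c i = ((a+b+1).choose (m+1) : ℤ) := by
      have hvd := vand a (b+1) (m+1)
      have h2 : a + (b+1) = a + b + 1 := by omega
      rw [h2] at hvd
      rw [← hvd]
      push_cast
      exact Finset.sum_congr rfl fun i _ => by simp [hc]
    have hid : ((a:ℤ)+b+1) * ((a+b).choose m) = ((m:ℤ)+1) * ((a+b+1).choose (m+1)) := by
      have h3 := Nat.add_one_mul_choose_eq (a+b) m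
      have h4 := congrArg (fun t : ℕ => (t:ℤ)) h3
      push_cast at h4
      linarith
    have hs : ∀ i ∈ range (m+2),
        c i * h i = c i * ((N:ℤ)*(m+1-i : ℕ)) - c i * (((m:ℤ)+1)*((b:ℤ)+1)) := by
      intro i _; simp only [hh]; push_cast; ring
    rw [Finset.sum_congr rfl hs, Finset.sum_sub_distrib, hb, ← Finset.sum_mul, hv]
    simp only [hN]
    push_cast
    linear_combination ((b:ℤ)+1) * hid
  have main : (0:ℤ) ≤ (N:ℤ) * (2*(b+1)*Sq a b m) - ((m+1):ℤ)*(b+1) * Sq a (b+1) (m+1) := by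
    rw [← E1, ← E2, ← Finset.sum_sub_distrib]
    have hs2 : ∀ i ∈ range (m+2), c i * 2^(m+1-i) * ((N:ℤ)*(m+1-i:ℕ))
        - c i * 2^(m+1-i) * (((m+1):ℤ)*(b+1)) = c i * 2^(m+1-i) * h i := by
      intro i _; simp only [hh]; push_cast; ring
    rw [Finset.sum_congr rfl hs2]
    calc (0:ℤ) = 2^j0 * ∑ i ∈ range (m+2), c i * h i := by rw [E3]; ring
    _ = ∑ i ∈ range (m+2), c i * 2^j0 * h i := by
        rw [Finset.mul_sum]; exact Finset.sum_congr rfl fun i _ => by ring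
    _ ≤ _ := Finset.sum_le_sum key
  push_cast at main ⊢
  rw [hN] at main; push_cast at main
  linarith

lemma Sq_zero_left (b m : ℕ) : Sq 0 b m = b.choose m * 2^m := by
  unfold Sq
  rw [Finset.sum_eq_single 0]
  · simp
  · intro i _ hi
    rcases Nat.exists_eq_succ_of_ne_zero hi with ⟨j, rfl⟩
    simp [Nat.choose_eq_zero_of_lt (Nat.succ_pos j)]
  · intro habs
    exact absurd (Finset.mem_range.mpr (Nat.succ_pos m)) habs

lemma Sq_main (a : ℕ) : ∀ b m : ℕ, m ≤ a + b →
    (Sq a b m : ℝ) ≤ (1 - (m:ℝ)/(2*(a+b)))^a * ((a+b).choose m) * 2^m := by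
  induction a with
  | zero =>
    intro b m _
    rw [Sq_zero_left]
    push_cast
    simp
  | succ a ih =>
    intro b m hm
    rcases m with _ | k
    · rw [Sq_zero]
      simp
    · -- m = k+1
      have e : a + (b+1) = a + 1 + b := by omega
      have hIH := ih (b+1) (k+1) (by omega)
      rw [e] at hIH
      set N : ℕ := a + 1 + b with hNdef
      have hNcast : (N:ℝ) = (a:ℝ) + 1 + (b:ℝ) := by rw [hNdef]; push_cast; ring
      have hN1 : (1:ℕ) ≤ N := by omega
      have hNR : (0:ℝ) < 2 * N := by
        have : (1:ℝ) ≤ (N:ℝ) := by exact_mod_cast hN1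
        linarith
      push_cast at hIH ⊢
      rw [show (a:ℝ) + ((b:ℝ)+1) = (N:ℝ) from by rw [hNcast]; ring] at hIH
      rw [show (a:ℝ) + 1 + (b:ℝ) = (N:ℝ) from hNcast.symm]
      set q : ℝ := 1 - ((k:ℝ)+1)/(2*(N:ℝ)) with hq
      have hq0 : 0 ≤ q := by
        rw [hq, sub_nonneg]
        rw [div_le_one hNR]
        have : ((k:ℝ)+1) ≤ (N:ℝ) := by exact_mod_cast hm
        linarith
      -- recursion
      have hR1 : (Sq (a+1) b (k+1) : ℝ) = Sq a (b+1) (k+1) - Sq a b k := by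
        have := congrArg (fun t : ℕ => (t:ℝ)) (Sq_R1 a b k)
        push_cast at this
        linarith
      -- star inequality
      have hstar := Sq_star a b k
      have hstarR : ((k:ℝ)+1) * (Sq a (b+1) (k+1) : ℝ) ≤ 2*(N:ℝ) * (Sq a b k : ℝ) := by
        have h1 : ((k+1) * (b+1) * Sq a (b+1) (k+1) : ℝ) ≤ (a+b+1) * (2 * (b+1) * Sq a b k) := by
          exact_mod_cast hstar
        have hb1 : (0:ℝ) < (b:ℝ)+1 := by positivity
        have hNe : ((a:ℝ)+b+1) = (N:ℝ) := by rw [hNcast]; ring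
        rw [hNe] at h1
        nlinarith [h1]
      have hS0 : ((k:ℝ)+1)/(2*(N:ℝ)) * (Sq a (b+1) (k+1) : ℝ) ≤ (Sq a b k : ℝ) := by
        rw [div_mul_eq_mul_div, div_le_iff₀ hNR]
        nlinarith [hstarR]
      have step1 : (Sq (a+1) b (k+1) : ℝ) ≤ q * (Sq a (b+1) (k+1) : ℝ) := by
        rw [hR1, hq]
        nlinarith [hS0]
      calc (Sq (a+1) b (k+1) : ℝ) ≤ q * (Sq a (b+1) (k+1) : ℝ) := step1
        _ ≤ q * (q^a * ((N).choose (k+1)) * 2^(k+1)) :=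
            mul_le_mul_of_nonneg_left hIH hq0
        _ = q^(a+1) * ((N).choose (k+1)) * 2^(k+1) := by rw [pow_succ]; ring
open Finset in
lemma card_edge (n : ℕ) : Fintype.card (Edge n) = n.choose 2 := by
  rw [Fintype.card_subtype]
  have h1 : (Finset.univ.filter fun e : Fin n × Fin n => e.1 < e.2).card
      = ∑ y : Fin n, (Finset.univ.filter fun x : Fin n => x < y).card := by
    rw [Finset.card_filter]
    rw [Fintype.sum_prod_type_right]
    congr 1
    ext y
    rw [Finset.card_filter]
  rw [h1]
  have h2 : ∀ y : Fin n, (Finset.univ.filter fun x : Fin n => x < y).card = (y : ℕ) := by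
    intro y
    have : (Finset.univ.filter fun x : Fin n => x < y) = Finset.Iio y := by
      ext x; simp
    rw [this, Fin.card_Iio]
  simp only [h2]
  rw [Fin.sum_univ_eq_sum_range (fun i => i) n, Nat.choose_two_right, Finset.sum_range_id]

open Polynomial Finset

noncomputable def ew {n : ℕ} (F : Finset (Edge n)) (o : Edge n → Bool)
    (e : Edge n) : Option Bool → ℕ[X]
  | none => 1
  | some b => if e ∈ F ∧ b = o e then 0 else X

lemma config_sum_poly (n : ℕ) (F : Finset (Edge n)) (o : Edge n → Bool) :
    ∑ f : Config n, (if ∀ e ∈ F, f e ≠ some (o e) then (X:ℕ[X])^(edgeCount f) else 0)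
      = (1+X)^F.card * (1+2*X)^(n.choose 2 - F.card) := by
  classical
  have lhs : ∀ f : Config n, (∏ e : Edge n, ew F o e (f e))
      = (if ∀ e ∈ F, f e ≠ some (o e) then (X:ℕ[X])^(edgeCount f) else 0) := by
    intro f
    by_cases hav : ∀ e ∈ F, f e ≠ some (o e)
    · rw [if_pos hav]
      have hfac : ∀ e : Edge n, ew F o e (f e) = if (f e).isSome then X else 1 := by
        intro e
        cases hfe : f e with
        | none => simp [ew]
        | some b =>
          have : ¬ (e ∈ F ∧ b = o e) := by
            rintro ⟨heF, rfl⟩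
            exact hav e heF hfe
          simp [ew, this]
      rw [Finset.prod_congr rfl (fun e _ => hfac e), Finset.prod_ite,
        Finset.prod_const, Finset.prod_const_one, mul_one]
      rfl
    · rw [if_neg hav]
      push_neg at hav
      obtain ⟨e, heF, hfe⟩ := hav
      refine Finset.prod_eq_zero (Finset.mem_univ e) ?_
      rw [hfe]
      simp [ew, heF]
  have := Fintype.prod_sum (fun e (v : Option Bool) => ew F o e v)
  rw [Finset.sum_congr rfl (fun f _ => (lhs f).symm)]
  rw [← this]
  have fac : ∀ e : Edge n, (∑ v : Option Bool, ew F o e v)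
      = if e ∈ F then 1 + X else 1 + 2*X := by
    intro e
    rw [Fintype.sum_option]
    rw [Fintype.sum_bool]
    by_cases heF : e ∈ F
    · rcases Bool.dichotomy (o e) with ho | ho <;>
        simp [ew, heF, ho, two_mul] <;> ring
    · simp [ew, heF, two_mul]
      try ring
  rw [Finset.prod_congr rfl (fun e _ => fac e), Finset.prod_ite, Finset.prod_const,
    Finset.prod_const, Finset.filter_univ_mem]
  congr 2
  rw [Finset.filter_not, Finset.filter_univ_mem, Finset.card_sdiff_of_subset (Finset.subset_univ F),
    Finset.card_univ, card_edge]

open Polynomial Finset in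
lemma coeff_one_add_two_X_pow (b j : ℕ) : ((1 + 2*X : ℕ[X])^b).coeff j = b.choose j * 2^j := by
  rw [add_comm, add_pow, finset_sum_coeff]
  have hterm : ∀ k ∈ range (b+1), ((2*X:ℕ[X])^k * 1^(b-k) * (b.choose k : ℕ[X])).coeff j
      = if j = k then b.choose k * 2^k else 0 := by
    intro k _
    rw [one_pow, mul_one, mul_pow, ← C_eq_natCast]
    rw [show ((2:ℕ[X])^k) = C (2^k) from by simp [map_pow, C_eq_natCast]]
    rw [mul_right_comm, ← C_mul, coeff_C_mul, coeff_X_pow]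
    split <;> simp <;> ring
  rw [Finset.sum_congr rfl hterm, Finset.sum_ite_eq (range (b+1)) j]
  split
  · ring
  · rename_i hj
    rw [mem_range, not_lt] at hj
    rw [Nat.choose_eq_zero_of_lt (by omega)]
    simp

open Polynomial Finset in
lemma count_eq (n m : ℕ) (F : Finset (Edge n)) (o : Edge n → Bool) :
    ∑ f : Config n, (if (∀ e ∈ F, f e ≠ some (o e)) ∧ edgeCount f = m then (1:ℕ) else 0)
      = Sq F.card (n.choose 2 - F.card) m := by
  classical
  have h := congrArg (fun p : ℕ[X] => p.coeff m) (config_sum_poly n F o)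
  rw [finset_sum_coeff] at h
  have hterm : ∀ f : Config n,
      ((if ∀ e ∈ F, f e ≠ some (o e) then (X:ℕ[X])^(edgeCount f) else 0)).coeff m
      = (if (∀ e ∈ F, f e ≠ some (o e)) ∧ edgeCount f = m then (1:ℕ) else 0) := by
    intro f
    by_cases h1 : ∀ e ∈ F, f e ≠ some (o e)
    · rw [if_pos h1, coeff_X_pow]
      by_cases h2 : edgeCount f = m
      · rw [if_pos h2.symm,
          if_pos (show (∀ e ∈ F, f e ≠ some (o e)) ∧ edgeCount f = m from ⟨h1, h2⟩)]
      · rw [if_neg (fun hh : m = edgeCount f => h2 hh.symm),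
          if_neg (fun hc : (∀ e ∈ F, f e ≠ some (o e)) ∧ edgeCount f = m => h2 hc.2)]
    · rw [if_neg h1, if_neg (fun hc => h1 hc.1)]
      simp
  rw [Finset.sum_congr rfl (fun f _ => hterm f)] at h
  rw [h, coeff_mul]
  have hij : ∀ ij ∈ Finset.HasAntidiagonal.antidiagonal m,
      ((1+X:ℕ[X])^F.card).coeff ij.1 * ((1+2*X:ℕ[X])^(n.choose 2 - F.card)).coeff ij.2
      = F.card.choose ij.1 * ((n.choose 2 - F.card).choose ij.2 * 2^ij.2) := by
    intro ij _
    rw [add_comm 1 (X:ℕ[X]), coeff_X_add_one_pow, coeff_one_add_two_X_pow]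
    push_cast
    ring
  rw [Finset.sum_congr rfl hij, Finset.Nat.sum_antidiagonal_eq_sum_range_succ
      (fun i j => F.card.choose i * ((n.choose 2 - F.card).choose j * 2^j)) m]
  rfl

end AuxProofs

/-- For all `n`, all `0 ≤ m ≤ C(n,2)` and any fixed set of directed
edges (a set `F` of unordered pairs with chosen orientations `o`), with
`p := m/C(n,2)`, the probability in `⃗G(n,m)` of avoiding these `|F|` directed edges
is at most `(1 - p/2)^|F|`. -/
theorem gnm_avoid_directed_edges_le
    (n m : ℕ) (hm : m ≤ Nat.choose n 2)
    (F : Finset (Edge n)) (o : Edge n → Bool) :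
    PrGnm n m {f | ∀ e ∈ F, f e ≠ some (o e)} ≤
      (1 - ((m : ℝ) / (Nat.choose n 2 : ℝ)) / 2) ^ F.card := by
  classical
  set N := n.choose 2 with hNdef
  set l := F.card with hldef
  have hl : l ≤ N := by
    rw [hldef, hNdef, ← card_edge n, ← Finset.card_univ]
    exact Finset.card_le_univ F
  have hPr : PrGnm n m {f | ∀ e ∈ F, f e ≠ some (o e)}
      = (Sq l (N - l) m : ℝ) / ((N.choose m : ℝ) * 2^m) := by
    unfold PrGnm prWeight
    have hind : ∀ f : Config n,
        ({f : Config n | ∀ e ∈ F, f e ≠ some (o e)}).indicator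
          (fun f => if edgeCount f = m then ((N.choose m : ℝ) * 2 ^ m)⁻¹ else 0) f
        = ((if (∀ e ∈ F, f e ≠ some (o e)) ∧ edgeCount f = m then (1:ℕ) else 0 : ℕ) : ℝ)
            * ((N.choose m : ℝ) * 2 ^ m)⁻¹ := by
      intro f
      rw [Set.indicator_apply]
      by_cases h1 : ∀ e ∈ F, f e ≠ some (o e) <;> by_cases h2 : edgeCount f = m <;>
        simp [h1, h2, Set.mem_setOf_eq]
    rw [Finset.sum_congr rfl (fun f _ => hind f), ← Finset.sum_mul, div_eq_mul_inv]
    congr 1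
    rw [← Nat.cast_sum]
    exact_mod_cast congrArg (fun t : ℕ => (t:ℝ)) (count_eq n m F o)
  have hmain := Sq_main l (N - l) m (by omega)
  have hsum : l + (N - l) = N := by omega
  have hcast : (l:ℝ) + ((N-l : ℕ):ℝ) = (N:ℝ) := by rw [Nat.cast_sub hl]; ring
  rw [hsum, hcast] at hmain
  have hcpos : (0:ℝ) < (N.choose m : ℝ) * 2^m := by
    have := Nat.choose_pos hm
    positivity
  rw [hPr, div_le_iff₀ hcpos]
  calc (Sq l (N - l) m : ℝ) ≤ (1 - (m:ℝ)/(2*(N:ℝ)))^l * ((N).choose m) * 2^m := hmain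
    _ = (1 - (m:ℝ) / (N:ℝ) / 2) ^ l * ((N.choose m : ℝ) * 2 ^ m) := by
        rw [div_div]
        ring_nf
end

section
/- Fix p ∈ (0,1] and for each n ≥ 2 fix two distinct vertices s, a of ⃗G(n,p). Then P(s↛a) = 2(1 − p/2)^{n−1} + O(n(1−p/2)^{2n}) as n → ∞; in particular P(s↛a) ∼ 2(1 − p/2)^{n−1}, i.e. P(s↛a)/(1−p/2)^{n−1} → 2. -/
open Filter Real

namespace GnpAux
open Finset

lemma prWeight_nonneg {α : Type*} [Fintype α] {w : α → ℝ} (hw : ∀ x, 0 ≤ w x) (E : Set α) :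
    0 ≤ prWeight w E :=
  Finset.sum_nonneg fun x _ => Set.indicator_nonneg (fun y _ => hw y) x

lemma prWeight_mono {α : Type*} [Fintype α] {w : α → ℝ} (hw : ∀ x, 0 ≤ w x) {E F : Set α}
    (h : E ⊆ F) : prWeight w E ≤ prWeight w F :=
  Finset.sum_le_sum fun x _ => Set.indicator_le_indicator_of_subset h hw x

lemma prWeight_union_add_inter {α : Type*} [Fintype α] (w : α → ℝ) (E F : Set α) :
    prWeight w (E ∪ F) + prWeight w (E ∩ F) = prWeight w E + prWeight w F := by
  classical
  unfold prWeight
  rw [← Finset.sum_add_distrib, ← Finset.sum_add_distrib]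
  refine Finset.sum_congr rfl fun x _ => ?_
  by_cases hE : x ∈ E <;> by_cases hF : x ∈ F <;>
    simp [Set.indicator_apply, hE, hF] <;> ring

lemma prWeight_biUnion_le {α ι : Type*} [Fintype α] {w : α → ℝ} (hw : ∀ x, 0 ≤ w x)
    (t : Finset ι) (E : ι → Set α) :
    prWeight w (⋃ i ∈ t, E i) ≤ ∑ i ∈ t, prWeight w (E i) := by
  classical
  unfold prWeight
  rw [Finset.sum_comm]
  refine Finset.sum_le_sum fun x _ => ?_
  by_cases hx : x ∈ ⋃ i ∈ t, E i
  · obtain ⟨i, hi, hxi⟩ := Set.mem_iUnion₂.1 hx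
    have h1 := Finset.single_le_sum (f := fun i => Set.indicator (E i) w x)
      (fun j _ => Set.indicator_nonneg (fun y _ => hw y) x) hi
    simp only [Set.indicator_of_mem hxi] at h1
    rw [Set.indicator_of_mem hx]
    exact h1
  · rw [Set.indicator_of_notMem hx]
    exact Finset.sum_nonneg fun j _ => Set.indicator_nonneg (fun y _ => hw y) x

lemma edgeWeight_nonneg {p : ℝ} (hp : p ∈ Set.Ioc (0:ℝ) 1) (b : Option Bool) :
    0 ≤ edgeWeight p b := by
  cases b <;> simp [edgeWeight] <;> [linarith [hp.2]; linarith [hp.1]]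

lemma config_weight_nonneg {N : ℕ} {p : ℝ} (hp : p ∈ Set.Ioc (0:ℝ) 1) (f : Config N) :
    0 ≤ ∏ e : Edge N, edgeWeight p (f e) :=
  Finset.prod_nonneg fun e _ => edgeWeight_nonneg hp _

lemma PrGnp_forall {N : ℕ} (p : ℝ) (A : Edge N → Finset (Option Bool)) :
    PrGnp N p {f | ∀ e, f e ∈ A e} = ∏ e, ∑ b ∈ A e, edgeWeight p b := by
  classical
  unfold PrGnp prWeight
  rw [Finset.sum_indicator_eq_sum_filter, Finset.prod_univ_sum]
  refine (Finset.sum_congr ?_ (fun _ _ => rfl)).symm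
  ext f
  simp [Fintype.mem_piFinset, Set.mem_setOf_eq]


variable {N : ℕ}

def crossP (S : Finset (Fin N)) (e : Edge N) : Prop :=
  (e.1.1 ∈ S ∧ e.1.2 ∉ S) ∨ (e.1.2 ∈ S ∧ e.1.1 ∉ S)

instance (S : Finset (Fin N)) : DecidablePred (crossP S) := fun e => by
  unfold crossP; infer_instance

def allowed (S : Finset (Fin N)) (e : Edge N) : Finset (Option Bool) :=
  if e.1.1 ∈ S ∧ e.1.2 ∉ S then {none, some false}
  else if e.1.2 ∈ S ∧ e.1.1 ∉ S then {none, some true}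
  else Finset.univ

def cutSet (S : Finset (Fin N)) : Set (Config N) := {f | ∀ e, f e ∈ allowed S e}

lemma sum_allowed (p : ℝ) (S : Finset (Fin N)) (e : Edge N) :
    ∑ b ∈ allowed S e, edgeWeight p b = if crossP S e then 1 - p / 2 else 1 := by
  unfold allowed
  by_cases h1 : e.1.1 ∈ S ∧ e.1.2 ∉ S
  · rw [if_pos h1, if_pos (show crossP S e from Or.inl h1)]
    rw [Finset.sum_pair (by simp : (none : Option Bool) ≠ some false)]
    simp [edgeWeight]; try ring
  · by_cases h2 : e.1.2 ∈ S ∧ e.1.1 ∉ S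
    · rw [if_neg h1, if_pos h2, if_pos (show crossP S e from Or.inr h2)]
      rw [Finset.sum_pair (by simp : (none : Option Bool) ≠ some true)]
      simp [edgeWeight]; try ring
    · rw [if_neg h1, if_neg h2, if_neg (show ¬ crossP S e by unfold crossP; tauto)]
      rw [show (Finset.univ : Finset (Option Bool)) = {none, some false, some true} by decide]
      rw [show ({none, some false, some true} : Finset (Option Bool))
          = insert none {some false, some true} from rfl]
      rw [Finset.sum_insert (by simp), Finset.sum_insert (by simp), Finset.sum_singleton]
      simp [edgeWeight]; try ring

lemma card_cross (S : Finset (Fin N)) :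
    (Finset.univ.filter (crossP S)).card = S.card * (N - S.card) := by
  classical
  have key : (Finset.univ.filter (crossP S)).card = (S ×ˢ Sᶜ).card := by
    apply Finset.card_nbij (i := fun e : Edge N => if e.1.1 ∈ S then e.1 else e.1.swap)
    · intro e he
      have hc : crossP S e := by
        exact (Finset.mem_filter.1 he).2
      rcases hc with h | h
      · simp [h.1, Finset.mem_product, h.2]
      · have h1 : e.1.1 ∉ S := h.2
        simp [h1, Finset.mem_product, h.1, Prod.swap]
    · intro e he e' he' heq
      simp only at heq
      by_cases h1 : e.1.1 ∈ S <;> by_cases h2 : e'.1.1 ∈ S <;>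
        simp only [h1, h2, if_true, if_false] at heq
      · exact Subtype.ext heq
      · exfalso
        have hA : e.1.1 = e'.1.2 := by rw [heq]; rfl
        have hB : e.1.2 = e'.1.1 := by rw [heq]; rfl
        have h3 := e.2; have h4 := e'.2
        rw [hA, hB] at h3
        exact lt_asymm h3 h4
      · exfalso
        have hA : e'.1.1 = e.1.2 := by rw [← heq]; rfl
        have hB : e'.1.2 = e.1.1 := by rw [← heq]; rfl
        have h3 := e.2; have h4 := e'.2
        rw [hA, hB] at h4
        exact lt_asymm h3 h4
      · exact Subtype.ext (Prod.swap_injective heq)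
    · intro x hx
      simp only [Finset.coe_product, Set.mem_prod, Finset.mem_coe, Finset.mem_compl] at hx
      have hne : x.1 ≠ x.2 := fun h => hx.2 (h ▸ hx.1)
      rcases lt_or_gt_of_ne hne with h | h
      · refine ⟨⟨x, h⟩, ?_, ?_⟩
        · refine Finset.mem_coe.2 (Finset.mem_filter.2 ?_)
          exact ⟨Finset.mem_univ _, Or.inl ⟨hx.1, hx.2⟩⟩
        · simp [hx.1]
      · refine ⟨⟨x.swap, h⟩, ?_, ?_⟩
        · refine Finset.mem_coe.2 (Finset.mem_filter.2 ?_)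
          exact ⟨Finset.mem_univ _, Or.inr ⟨hx.1, hx.2⟩⟩
        · have hxs : x.swap.1 ∉ S := hx.2
          simp only [hxs, if_false, Prod.swap_swap]
  rw [key, Finset.card_product, Finset.card_compl, Fintype.card_fin]


lemma edge_eta (e : Edge N) (h : e.1.1 < e.1.2) : (⟨(e.1.1, e.1.2), h⟩ : Edge N) = e :=
  Subtype.ext rfl

lemma cutSet_of_closed {f : Config N} {S : Finset (Fin N)}
    (h : ∀ u ∈ S, ∀ v, v ∉ S → ¬ DirEdge f u v) : f ∈ cutSet S := by
  intro e
  unfold allowed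
  split_ifs with h1 h2
  · have hne := h _ h1.1 _ h1.2
    rcases hfe : f e with _ | b
    · simp
    · cases b
      · simp
      · exact absurd (Or.inl ⟨e.2, by rw [edge_eta e e.2]; exact hfe⟩) hne
  · have hne := h _ h2.1 _ h2.2
    rcases hfe : f e with _ | b
    · simp
    · cases b
      · exact absurd (Or.inr ⟨e.2, by rw [edge_eta e e.2]; exact hfe⟩) hne
      · simp
  · exact Finset.mem_univ _

lemma not_dirEdge_of_cutSet {f : Config N} {S : Finset (Fin N)} (hf : f ∈ cutSet S) :
    ∀ u ∈ S, ∀ v, v ∉ S → ¬ DirEdge f u v := by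
  intro u hu v hv hd
  rcases hd with ⟨h, hfe⟩ | ⟨h, hfe⟩
  · have hmem := hf ⟨(u, v), h⟩
    unfold allowed at hmem
    rw [if_pos (⟨hu, hv⟩ : u ∈ S ∧ v ∉ S)] at hmem
    rw [hfe] at hmem
    simp at hmem
  · have hmem := hf ⟨(v, u), h⟩
    unfold allowed at hmem
    rw [if_neg (by exact fun hc => hv hc.1), if_pos (⟨hu, hv⟩ : u ∈ S ∧ v ∉ S)] at hmem
    rw [hfe] at hmem
    simp at hmem

lemma cutSet_subset_not_reach {S : Finset (Fin N)} {s a : Fin N} (hs : s ∈ S) (ha : a ∉ S) :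
    cutSet S ⊆ {f | ¬ Reaches f s a} := by
  intro f hf hreach
  have key : ∀ v, Reaches f s v → v ∈ S := by
    intro v hv
    induction hv with
    | refl => exact hs
    | tail _ hedge ih =>
      by_contra hnot
      exact not_dirEdge_of_cutSet hf _ ih _ hnot hedge
  exact ha (key a hreach)

lemma not_reach_subset_union {s a : Fin N} :
    {f : Config N | ¬ Reaches f s a} ⊆
      ⋃ S ∈ Finset.univ.filter (fun S : Finset (Fin N) => s ∈ S ∧ a ∉ S), cutSet S := by
  classical
  intro f hf
  set S := Finset.univ.filter (fun v => Reaches f s v) with hS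
  have hsS : s ∈ S := by
    rw [hS, Finset.mem_filter]; exact ⟨Finset.mem_univ _, Relation.ReflTransGen.refl⟩
  have haS : a ∉ S := by
    rw [hS, Finset.mem_filter]; exact fun hc => hf hc.2
  refine Set.mem_iUnion₂.2 ⟨S, ?_, ?_⟩
  · exact Finset.mem_filter.2 ⟨Finset.mem_univ _, hsS, haS⟩
  · apply cutSet_of_closed
    intro u hu v hv hd
    refine hv ?_
    rw [hS, Finset.mem_filter] at hu ⊢
    exact ⟨Finset.mem_univ _, hu.2.tail hd⟩

lemma PrGnp_cutSet (p : ℝ) (S : Finset (Fin N)) :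
    PrGnp N p (cutSet S) = (1 - p / 2) ^ (S.card * (N - S.card)) := by
  classical
  have : cutSet S = {f | ∀ e, f e ∈ allowed S e} := rfl
  rw [this, PrGnp_forall]
  rw [Finset.prod_congr rfl (fun e _ => sum_allowed p S e)]
  rw [Finset.prod_ite, Finset.prod_const, Finset.prod_const, one_pow, mul_one, card_cross]


lemma inter_card_le_one {s a : Fin N} (hsa : s ≠ a) :
    ((Finset.univ.filter (crossP {s})) ∩ (Finset.univ.filter (crossP ({a} : Finset (Fin N))ᶜ))).card ≤ 1 := by
  classical
  rw [Finset.card_le_one]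
  have hchar : ∀ e : Edge N, crossP {s} e → crossP ({a} : Finset (Fin N))ᶜ e →
      e.1 = (s, a) ∨ e.1 = (a, s) := by
    intro e h1 h2
    simp only [crossP, Finset.mem_singleton, Finset.mem_compl, not_not] at h1 h2
    rcases h1 with ⟨hA, hB⟩ | ⟨hA, hB⟩ <;> rcases h2 with ⟨hC, hD⟩ | ⟨hC, hD⟩
    · exact Or.inl (Prod.ext hA hD)
    · exact absurd (hA.symm.trans hD) hsa
    · exact absurd (hA.symm.trans hD) (by simp [hsa])
    · exact Or.inr (Prod.ext hD hA)
  intro e he e' he'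
  rw [Finset.mem_inter, Finset.mem_filter, Finset.mem_filter] at he he'
  have h1 := hchar e he.1.2 he.2.2
  have h2 := hchar e' he'.1.2 he'.2.2
  have hord := e.2
  have hord' := e'.2
  apply Subtype.ext
  rcases h1 with h1 | h1 <;> rcases h2 with h2 | h2
  · rw [h1, h2]
  · exfalso
    rw [h1] at hord; rw [h2] at hord'
    exact absurd ((show s < a from hord).trans (show a < s from hord')) (lt_irrefl _)
  · exfalso
    rw [h1] at hord; rw [h2] at hord'
    exact absurd ((show a < s from hord).trans (show s < a from hord')) (lt_irrefl _)
  · rw [h1, h2]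

lemma lower_bound (p : ℝ) (hp : p ∈ Set.Ioc (0:ℝ) 1) {s a : Fin N} (hsa : s ≠ a)
    (hN : 2 ≤ N) :
    2 * (1 - p / 2) ^ (N - 1) - (1 - p / 2) ^ (2 * N - 3)
      ≤ PrGnp N p {f | ¬ Reaches f s a} := by
  classical
  set q : ℝ := 1 - p / 2 with hq
  have hq0 : 0 ≤ q := by rw [hq]; linarith [hp.2]
  have hq1 : q ≤ 1 := by rw [hq]; linarith [hp.1]
  have hw : ∀ f : Config N, 0 ≤ ∏ e : Edge N, edgeWeight p (f e) :=
    fun f => config_weight_nonneg hp f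
  set Sa : Finset (Fin N) := ({a} : Finset (Fin N))ᶜ with hSa
  have hsub : cutSet {s} ∪ cutSet Sa ⊆ {f : Config N | ¬ Reaches f s a} := by
    apply Set.union_subset
    · exact cutSet_subset_not_reach (Finset.mem_singleton_self s)
        (fun hc => hsa (Finset.mem_singleton.1 hc).symm)
    · exact cutSet_subset_not_reach (by simp [hSa, hsa]) (by simp [hSa])
  have hP1 : PrGnp N p (cutSet {s}) = q ^ (N - 1) := by
    rw [PrGnp_cutSet, ← hq]
    congr 1
    simp
  have hP2 : PrGnp N p (cutSet Sa) = q ^ (N - 1) := by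
    rw [PrGnp_cutSet, ← hq]
    congr 1
    rw [hSa, Finset.card_compl, Fintype.card_fin, Finset.card_singleton]
    have : N - (N - 1) = 1 := by omega
    rw [this, mul_one]
  -- bound the intersection
  have hPinter : PrGnp N p (cutSet {s} ∩ cutSet Sa) ≤ q ^ (2 * N - 3) := by
    set C : Edge N → Finset (Option Bool) :=
      fun e => if crossP {s} e then allowed {s} e else allowed Sa e with hC
    have hsub2 : cutSet {s} ∩ cutSet Sa ⊆ {f : Config N | ∀ e, f e ∈ C e} := by
      rintro f ⟨h1, h2⟩ e
      show f e ∈ if crossP {s} e then allowed {s} e else allowed Sa e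
      split_ifs
      · exact h1 e
      · exact h2 e
    have hmono := prWeight_mono (w := fun f : Config N => ∏ e : Edge N, edgeWeight p (f e))
      hw hsub2
    have heq : PrGnp N p {f : Config N | ∀ e, f e ∈ C e}
        = q ^ ((Finset.univ.filter (fun e : Edge N => crossP {s} e ∨ crossP Sa e)).card) := by
      rw [PrGnp_forall]
      have hws : ∀ e : Edge N, ∑ b ∈ C e, edgeWeight p b
          = if crossP {s} e ∨ crossP Sa e then q else 1 := by
        intro e
        show (∑ b ∈ (if crossP {s} e then allowed {s} e else allowed Sa e), edgeWeight p b) = _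
        by_cases h1 : crossP {s} e
        · rw [if_pos h1, sum_allowed, if_pos h1, if_pos (Or.inl h1), hq]
        · rw [if_neg h1, sum_allowed, ← hq]
          by_cases h2 : crossP Sa e
          · rw [if_pos h2, if_pos (Or.inr h2)]
          · rw [if_neg h2, if_neg (by tauto)]
      rw [Finset.prod_congr rfl (fun e _ => hws e), Finset.prod_ite, Finset.prod_const,
        Finset.prod_const, one_pow, mul_one]
    have hcard : 2 * N - 3 ≤
        (Finset.univ.filter (fun e : Edge N => crossP {s} e ∨ crossP Sa e)).card := by
      have hsplit : (Finset.univ.filter (fun e : Edge N => crossP {s} e ∨ crossP Sa e))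
          = (Finset.univ.filter (crossP {s})) ∪ (Finset.univ.filter (crossP Sa)) := by
        rw [Finset.filter_or]
      have hc1 : (Finset.univ.filter (crossP ({s} : Finset (Fin N)))).card = N - 1 := by
        rw [card_cross, Finset.card_singleton, one_mul]
      have hc2 : (Finset.univ.filter (crossP Sa)).card = N - 1 := by
        rw [card_cross, hSa, Finset.card_compl, Fintype.card_fin, Finset.card_singleton,
          show N - (N - 1) = 1 by omega, mul_one]
      have hinter := inter_card_le_one (N := N) (s := s) (a := a) hsa
      rw [← hSa] at hinter
      have hu := Finset.card_union_add_card_inter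
        (Finset.univ.filter (crossP ({s} : Finset (Fin N))))
        (Finset.univ.filter (crossP Sa))
      rw [hsplit]
      omega
    calc PrGnp N p (cutSet {s} ∩ cutSet Sa)
        ≤ PrGnp N p {f : Config N | ∀ e, f e ∈ C e} := hmono
      _ = q ^ ((Finset.univ.filter (fun e : Edge N => crossP {s} e ∨ crossP Sa e)).card) := heq
      _ ≤ q ^ (2 * N - 3) := pow_le_pow_of_le_one hq0 hq1 hcard
  have hUnion := prWeight_union_add_inter
    (fun f : Config N => ∏ e : Edge N, edgeWeight p (f e)) (cutSet {s}) (cutSet Sa)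
  have hmono2 := prWeight_mono (w := fun f : Config N => ∏ e : Edge N, edgeWeight p (f e))
    hw hsub
  have hUnion' : PrGnp N p (cutSet {s} ∪ cutSet Sa) + PrGnp N p (cutSet {s} ∩ cutSet Sa)
      = PrGnp N p (cutSet {s}) + PrGnp N p (cutSet Sa) := hUnion
  rw [hP1, hP2] at hUnion'
  have hmono2' : PrGnp N p (cutSet {s} ∪ cutSet Sa)
      ≤ PrGnp N p {f : Config N | ¬ Reaches f s a} := hmono2
  have hPi0 : 0 ≤ PrGnp N p (cutSet {s} ∩ cutSet Sa) :=
    prWeight_nonneg (fun f => config_weight_nonneg hp f) _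
  linarith


lemma min_mul_eq {k N : ℕ} (hk : k ≤ N) : k * (N - k) = min k (N - k) * (N - min k (N - k)) := by
  rcases min_cases k (N - k) with ⟨hmin, _⟩ | ⟨hmin, _⟩
  · rw [hmin]
  · rw [hmin, Nat.sub_sub_self hk, Nat.mul_comm]

lemma exp_lower {k N : ℕ} (hN : 12 ≤ N) (hk2 : 2 ≤ k) (hkN : k ≤ N - 2) :
    2 * N - 4 + (min k (N - k) - 2) * (N / 2 - 2) ≤ k * (N - k) := by
  set m := min k (N - k) with hm
  have hm2 : 2 ≤ m := by
    rw [hm]; rcases min_cases k (N - k) with ⟨h, _⟩ | ⟨h, _⟩ <;> omega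
  have hmhalf : m ≤ N / 2 := by
    have h1 : m ≤ k := min_le_left _ _
    have h2 : m ≤ N - k := min_le_right _ _
    omega
  obtain ⟨j, hj⟩ : ∃ j, m = j + 2 := ⟨m - 2, by omega⟩
  obtain ⟨i, hi⟩ : ∃ i, N - m = i + 2 := ⟨N - m - 2, by omega⟩
  have hN4 : N = m + i + 2 := by omega
  have hstep : N / 2 - 2 ≤ i := by omega
  have e1 : k * (N - k) = m * (N - m) := min_mul_eq (by omega)
  have e2 : m * (N - m) = j * i + 2 * j + 2 * i + 4 := by
    rw [hi, hj]; ring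
  have e3 : (m - 2) * (N / 2 - 2) ≤ j * i := by
    rw [show m - 2 = j by omega]
    exact Nat.mul_le_mul_left _ hstep
  have e4 : 2 * N - 4 = 2 * j + 2 * i + 4 := by omega
  omega

lemma count_le_choose {s a : Fin N} (hsa : s ≠ a) (k : ℕ)
    (𝒯 : Finset (Finset (Fin N))) (h𝒯 : ∀ S ∈ 𝒯, s ∈ S ∧ a ∉ S ∧ S.card = k) :
    𝒯.card ≤ (N - 2).choose (k - 1) := by
  classical
  set T : Finset (Fin N) := (Finset.univ.erase s).erase a with hT
  have hTcard : T.card = N - 2 := by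
    rw [hT, Finset.card_erase_of_mem (Finset.mem_erase.2 ⟨hsa.symm, Finset.mem_univ a⟩),
      Finset.card_erase_of_mem (Finset.mem_univ s), Finset.card_univ, Fintype.card_fin]
    omega
  have := Finset.card_le_card_of_injOn (f := fun S => S.erase s)
    (s := 𝒯) (t := Finset.powersetCard (k - 1) T) ?_ ?_
  · rwa [Finset.card_powersetCard, hTcard] at this
  · intro S hS
    obtain ⟨hs, ha, hcard⟩ := h𝒯 S hS
    simp only [Finset.mem_coe, Finset.mem_powersetCard]
    constructor
    · intro v hv
      rw [Finset.mem_erase] at hv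
      rw [hT, Finset.mem_erase, Finset.mem_erase]
      exact ⟨fun hc => ha (hc ▸ hv.2), hv.1, Finset.mem_univ v⟩
    · rw [Finset.card_erase_of_mem hs, hcard]
  · intro S hS S' hS' heq
    obtain ⟨hs, _, _⟩ := h𝒯 S (Finset.mem_coe.1 hS)
    obtain ⟨hs', _, _⟩ := h𝒯 S' (Finset.mem_coe.1 hS')
    rw [← Finset.insert_erase hs, ← Finset.insert_erase hs']
    simp only at heq
    rw [heq]

lemma choose_le_pow_min {k : ℕ} (hN : 12 ≤ N) (hk2 : 2 ≤ k) (hkN : k ≤ N - 2) :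
    ((N - 2).choose (k - 1) : ℝ) ≤ (N : ℝ) ^ (min k (N - k) - 1) := by
  have key : (N - 2).choose (k - 1) ≤ N ^ (min k (N - k) - 1) := by
    rcases min_cases k (N - k) with ⟨hmin, _⟩ | ⟨hmin, hle⟩
    · rw [hmin]
      calc (N - 2).choose (k - 1) ≤ (N - 2) ^ (k - 1) := Nat.choose_le_pow _ _
        _ ≤ N ^ (k - 1) := Nat.pow_le_pow_left (by omega) _
    · rw [hmin]
      have hsymm : (N - 2).choose (k - 1) = (N - 2).choose (N - 1 - k) := by
        rw [show N - 1 - k = (N - 2) - (k - 1) by omega]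
        exact (Nat.choose_symm (by omega)).symm
      rw [hsymm]
      calc (N - 2).choose (N - 1 - k) ≤ (N - 2) ^ (N - 1 - k) := Nat.choose_le_pow _ _
        _ ≤ N ^ (N - 1 - k) := Nat.pow_le_pow_left (by omega) _
        _ = N ^ (N - k - 1) := by rw [show N - 1 - k = N - k - 1 by omega]
  calc ((N - 2).choose (k - 1) : ℝ) ≤ (N ^ (min k (N - k) - 1) : ℕ) := by exact_mod_cast key
    _ = (N : ℝ) ^ (min k (N - k) - 1) := by push_cast; ring

lemma term_bound {q : ℝ} (hq0 : 0 ≤ q) (hq1 : q ≤ 1) {k : ℕ} (hN : 12 ≤ N)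
    (hk2 : 2 ≤ k) (hkN : k ≤ N - 2) :
    ((N - 2).choose (k - 1) : ℝ) * q ^ (k * (N - k)) ≤
      (N : ℝ) * q ^ (2 * N - 4) *
        (((N : ℝ) * q ^ (N / 2 - 2)) ^ (k - 2) + ((N : ℝ) * q ^ (N / 2 - 2)) ^ (N - k - 2)) := by
  set m := min k (N - k) with hm
  set y : ℝ := (N : ℝ) * q ^ (N / 2 - 2) with hy
  have hy0 : 0 ≤ y := by positivity
  have hm2 : 2 ≤ m := by
    rw [hm]; rcases min_cases k (N - k) with ⟨h, _⟩ | ⟨h, _⟩ <;> omega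
  have hqpow : q ^ (k * (N - k)) ≤ q ^ (2 * N - 4) * (q ^ (N / 2 - 2)) ^ (m - 2) := by
    calc q ^ (k * (N - k)) ≤ q ^ (2 * N - 4 + (m - 2) * (N / 2 - 2)) :=
          pow_le_pow_of_le_one hq0 hq1 (exp_lower hN hk2 hkN)
      _ = q ^ (2 * N - 4) * (q ^ (N / 2 - 2)) ^ (m - 2) := by
          rw [pow_add, mul_comm (m - 2) (N / 2 - 2), pow_mul]
  have hchoose := choose_le_pow_min (N := N) hN hk2 hkN
  have step1 : ((N - 2).choose (k - 1) : ℝ) * q ^ (k * (N - k)) ≤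
      (N : ℝ) ^ (m - 1) * (q ^ (2 * N - 4) * (q ^ (N / 2 - 2)) ^ (m - 2)) := by
    apply mul_le_mul hchoose hqpow (by positivity) (by positivity)
  have step2 : (N : ℝ) ^ (m - 1) * (q ^ (2 * N - 4) * (q ^ (N / 2 - 2)) ^ (m - 2)) =
      (N : ℝ) * q ^ (2 * N - 4) * y ^ (m - 2) := by
    rw [show m - 1 = (m - 2) + 1 by omega, pow_succ, hy, mul_pow]
    ring
  have step3 : y ^ (m - 2) ≤ y ^ (k - 2) + y ^ (N - k - 2) := by
    rcases min_cases k (N - k) with ⟨hmin, _⟩ | ⟨hmin, _⟩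
    · rw [hm, hmin]
      exact le_add_of_nonneg_right (by positivity)
    · rw [hm, hmin, show N - k - 2 = (N - k) - 2 from rfl]
      exact le_add_of_nonneg_left (by positivity)
  calc ((N - 2).choose (k - 1) : ℝ) * q ^ (k * (N - k)) ≤
        (N : ℝ) * q ^ (2 * N - 4) * y ^ (m - 2) := by rw [← step2]; exact step1
    _ ≤ (N : ℝ) * q ^ (2 * N - 4) * (y ^ (k - 2) + y ^ (N - k - 2)) := by
        apply mul_le_mul_of_nonneg_left step3 (by positivity)


lemma sum_pow_le_two {y : ℝ} (hy0 : 0 ≤ y) (hy : y ≤ 1 / 2) (n : ℕ) :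
    ∑ i ∈ Finset.range n, y ^ i ≤ 2 :=
  calc ∑ i ∈ Finset.range n, y ^ i ≤ ∑ i ∈ Finset.range n, (1 / 2 : ℝ) ^ i :=
        Finset.sum_le_sum fun i _ => pow_le_pow_left₀ hy0 hy i
    _ ≤ 2 := sum_geometric_two_le n

lemma upper_bound (p : ℝ) (hp : p ∈ Set.Ioc (0:ℝ) 1) {s a : Fin N} (hsa : s ≠ a)
    (hN : 12 ≤ N) (hy : (N : ℝ) * (1 - p / 2) ^ (N / 2 - 2) ≤ 1 / 2) :
    PrGnp N p {f | ¬ Reaches f s a} ≤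
      2 * (1 - p / 2) ^ (N - 1) + 4 * N * (1 - p / 2) ^ (2 * N - 4) := by
  classical
  set q : ℝ := 1 - p / 2 with hq
  have hq0 : 0 ≤ q := by rw [hq]; linarith [hp.2]
  have hq1 : q ≤ 1 := by rw [hq]; linarith [hp.1]
  have hw : ∀ f : Config N, 0 ≤ ∏ e : Edge N, edgeWeight p (f e) :=
    fun f => config_weight_nonneg hp f
  set 𝒮 : Finset (Finset (Fin N)) :=
    Finset.univ.filter (fun S : Finset (Fin N) => s ∈ S ∧ a ∉ S) with h𝒮
  set g : Finset (Fin N) → ℝ := fun S => q ^ (S.card * (N - S.card)) with hg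
  -- union bound
  have h0 : PrGnp N p {f | ¬ Reaches f s a} ≤ ∑ S ∈ 𝒮, g S := by
    have hA : PrGnp N p {f : Config N | ¬ Reaches f s a} ≤
        prWeight (fun f : Config N => ∏ e : Edge N, edgeWeight p (f e)) (⋃ S ∈ 𝒮, cutSet S) :=
      prWeight_mono hw not_reach_subset_union
    have hB := prWeight_biUnion_le hw 𝒮 cutSet
    have hC : ∀ S ∈ 𝒮, prWeight (fun f : Config N => ∏ e : Edge N, edgeWeight p (f e))
        (cutSet S) = g S := fun S _ => PrGnp_cutSet p S
    rw [Finset.sum_congr rfl hC] at hB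
    exact hA.trans hB
  -- split off the two singletons
  set Sa : Finset (Fin N) := ({a} : Finset (Fin N))ᶜ with hSaDef
  have hcard_s : ({s} : Finset (Fin N)).card = 1 := Finset.card_singleton s
  have hcard_Sa : Sa.card = N - 1 := by
    rw [hSaDef, Finset.card_compl, Fintype.card_fin, Finset.card_singleton]
  have hs𝒮 : ({s} : Finset (Fin N)) ∈ 𝒮 := by
    rw [h𝒮, Finset.mem_filter]
    exact ⟨Finset.mem_univ _, Finset.mem_singleton_self s,
      fun hc => hsa (Finset.mem_singleton.1 hc).symm⟩
  have hSa𝒮 : Sa ∈ 𝒮 := by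
    rw [h𝒮, Finset.mem_filter, hSaDef]
    refine ⟨Finset.mem_univ _, ?_, ?_⟩
    · rw [Finset.mem_compl, Finset.mem_singleton]; exact hsa
    · rw [Finset.mem_compl, Finset.mem_singleton]; simp
  have hne : Sa ≠ ({s} : Finset (Fin N)) := by
    intro hc
    rw [hc] at hcard_Sa
    rw [hcard_s] at hcard_Sa
    omega
  have hSa_erase : Sa ∈ 𝒮.erase {s} := Finset.mem_erase.2 ⟨hne, hSa𝒮⟩
  have hsplit1 : ∑ S ∈ 𝒮, g S = g {s} + ∑ S ∈ 𝒮.erase {s}, g S :=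
    (Finset.add_sum_erase 𝒮 g hs𝒮).symm
  have hsplit2 : ∑ S ∈ 𝒮.erase {s}, g S = g Sa + ∑ S ∈ (𝒮.erase {s}).erase Sa, g S :=
    (Finset.add_sum_erase _ g hSa_erase).symm
  have hgs : g {s} = q ^ (N - 1) := by
    rw [hg]
    simp only [hcard_s, one_mul]
  have hgSa : g Sa = q ^ (N - 1) := by
    rw [hg]
    simp only [hcard_Sa]
    rw [show N - (N - 1) = 1 by omega, mul_one]
  -- the remainder sum
  set 𝒮'' : Finset (Finset (Fin N)) := (𝒮.erase {s}).erase Sa with h𝒮''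
  have hrange : ∀ S ∈ 𝒮'', 2 ≤ S.card ∧ S.card ≤ N - 2 := by
    intro S hS
    rw [h𝒮'', Finset.mem_erase, Finset.mem_erase, h𝒮, Finset.mem_filter] at hS
    obtain ⟨hSne, hSne', -, hsS, haS⟩ := hS
    have h1 : 1 ≤ S.card := Finset.card_pos.2 ⟨s, hsS⟩
    have hsub : S ⊆ Sa := by
      intro v hv
      rw [hSaDef, Finset.mem_compl, Finset.mem_singleton]
      exact fun hc => haS (hc ▸ hv)
    have h2 : S.card ≤ N - 1 := hcard_Sa ▸ Finset.card_le_card hsub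
    constructor
    · rcases Nat.lt_or_ge S.card 2 with hlt | hge
      · exfalso
        have : S.card = 1 := by omega
        obtain ⟨x, hx⟩ := Finset.card_eq_one.1 this
        rw [hx] at hsS
        rw [Finset.mem_singleton] at hsS
        exact hSne' (by rw [hx, hsS])
      · exact hge
    · rcases Nat.lt_or_ge S.card (N - 1) with hlt | hge
      · omega
      · exfalso
        have hScard : Sa.card ≤ S.card := by omega
        exact hSne (Finset.eq_of_subset_of_card_le hsub hScard)
  set y : ℝ := (N : ℝ) * q ^ (N / 2 - 2) with hydef
  have hy0 : 0 ≤ y := by positivity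
  have hfib : ∑ S ∈ 𝒮'', g S =
      ∑ k ∈ Finset.Icc 2 (N - 2), ∑ S ∈ 𝒮''.filter (fun S => S.card = k), g S :=
    (Finset.sum_fiberwise_of_maps_to
      (fun S hS => Finset.mem_Icc.2 (hrange S hS)) g).symm
  have hinner : ∀ k ∈ Finset.Icc 2 (N - 2),
      ∑ S ∈ 𝒮''.filter (fun S => S.card = k), g S ≤
        (N : ℝ) * q ^ (2 * N - 4) * (y ^ (k - 2) + y ^ (N - k - 2)) := by
    intro k hk
    rw [Finset.mem_Icc] at hk
    have hconst : ∀ S ∈ 𝒮''.filter (fun S => S.card = k), g S = q ^ (k * (N - k)) := by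
      intro S hS
      rw [Finset.mem_filter] at hS
      rw [hg]
      simp only [hS.2]
    rw [Finset.sum_congr rfl hconst, Finset.sum_const, nsmul_eq_mul]
    have hcount : (𝒮''.filter (fun S => S.card = k)).card ≤ (N - 2).choose (k - 1) := by
      apply count_le_choose hsa k
      intro S hS
      rw [Finset.mem_filter] at hS
      have hS2 := hS.1
      rw [h𝒮'', Finset.mem_erase, Finset.mem_erase, h𝒮, Finset.mem_filter] at hS2
      exact ⟨hS2.2.2.2.1, hS2.2.2.2.2, hS.2⟩
    calc ((𝒮''.filter (fun S => S.card = k)).card : ℝ) * q ^ (k * (N - k))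
        ≤ ((N - 2).choose (k - 1) : ℝ) * q ^ (k * (N - k)) := by
          apply mul_le_mul_of_nonneg_right _ (by positivity)
          exact_mod_cast hcount
      _ ≤ (N : ℝ) * q ^ (2 * N - 4) * (y ^ (k - 2) + y ^ (N - k - 2)) :=
          term_bound hq0 hq1 hN hk.1 hk.2
  have hsum1 : ∑ k ∈ Finset.Icc 2 (N - 2), y ^ (k - 2) ≤ 2 := by
    rw [← Finset.Ico_add_one_right_eq_Icc, Finset.sum_Ico_eq_sum_range]
    calc ∑ i ∈ Finset.range (N - 2 + 1 - 2), y ^ (2 + i - 2) =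
          ∑ i ∈ Finset.range (N - 2 + 1 - 2), y ^ i := by
          apply Finset.sum_congr rfl; intro i _; congr 1; omega
      _ ≤ 2 := sum_pow_le_two hy0 hy _
  have hsum2 : ∑ k ∈ Finset.Icc 2 (N - 2), y ^ (N - k - 2) ≤ 2 := by
    rw [← Finset.Ico_add_one_right_eq_Icc, Finset.sum_Ico_eq_sum_range]
    have hre : ∑ i ∈ Finset.range (N - 2 + 1 - 2), y ^ (N - (2 + i) - 2) =
        ∑ i ∈ Finset.range (N - 2 + 1 - 2), y ^ i := by
      calc ∑ i ∈ Finset.range (N - 2 + 1 - 2), y ^ (N - (2 + i) - 2) =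
            ∑ i ∈ Finset.range (N - 2 + 1 - 2), y ^ (N - 2 + 1 - 2 - 1 - i) := by
            apply Finset.sum_congr rfl; intro i hi
            rw [Finset.mem_range] at hi
            congr 1; omega
        _ = ∑ i ∈ Finset.range (N - 2 + 1 - 2), y ^ i :=
            Finset.sum_range_reflect (fun i => y ^ i) _
    rw [hre]
    exact sum_pow_le_two hy0 hy _
  have hrest : ∑ S ∈ 𝒮'', g S ≤ 4 * N * q ^ (2 * N - 4) := by
    rw [hfib]
    calc ∑ k ∈ Finset.Icc 2 (N - 2), ∑ S ∈ 𝒮''.filter (fun S => S.card = k), g S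
        ≤ ∑ k ∈ Finset.Icc 2 (N - 2),
            (N : ℝ) * q ^ (2 * N - 4) * (y ^ (k - 2) + y ^ (N - k - 2)) :=
          Finset.sum_le_sum hinner
      _ = (N : ℝ) * q ^ (2 * N - 4) *
            ((∑ k ∈ Finset.Icc 2 (N - 2), y ^ (k - 2)) +
              ∑ k ∈ Finset.Icc 2 (N - 2), y ^ (N - k - 2)) := by
          rw [← Finset.sum_add_distrib, ← Finset.mul_sum]
      _ ≤ (N : ℝ) * q ^ (2 * N - 4) * (2 + 2) := by
          apply mul_le_mul_of_nonneg_left _ (by positivity)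
          linarith
      _ = 4 * N * q ^ (2 * N - 4) := by ring
  calc PrGnp N p {f | ¬ Reaches f s a} ≤ ∑ S ∈ 𝒮, g S := h0
    _ = q ^ (N - 1) + (q ^ (N - 1) + ∑ S ∈ 𝒮'', g S) := by
        rw [hsplit1, hsplit2, hgs, hgSa, h𝒮'']
    _ ≤ q ^ (N - 1) + (q ^ (N - 1) + 4 * N * q ^ (2 * N - 4)) := by linarith
    _ = 2 * q ^ (N - 1) + 4 * N * q ^ (2 * N - 4) := by ring


lemma full_estimate (p : ℝ) (hp : p ∈ Set.Ioc (0:ℝ) 1) {s a : Fin N} (hsa : s ≠ a)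
    (hN : 12 ≤ N) (hy : (N : ℝ) * (1 - p / 2) ^ (N / 2 - 2) ≤ 1 / 2) :
    |PrGnp N p {f | ¬ Reaches f s a} - 2 * (1 - p / 2) ^ (N - 1)| ≤
      64 * N * (1 - p / 2) ^ (2 * N) := by
  set q : ℝ := 1 - p / 2 with hq
  have hq0 : 0 ≤ q := by rw [hq]; linarith [hp.2]
  have hq2 : 1 / 2 ≤ q := by rw [hq]; linarith [hp.2]
  have hq1 : q ≤ 1 := by rw [hq]; linarith [hp.1]
  have hlow := lower_bound p hp hsa (by omega : 2 ≤ N)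
  have hupp := upper_bound p hp hsa hN hy
  rw [← hq] at hlow hupp
  clear_value q
  have hN1 : (1 : ℝ) ≤ (N : ℝ) := by exact_mod_cast Nat.one_le_iff_ne_zero.2 (by omega)
  have hb1 : q ^ (2 * N - 3) ≤ 64 * N * q ^ (2 * N) := by
    have e : q ^ (2 * N) = q ^ 3 * q ^ (2 * N - 3) := by
      rw [← pow_add]; congr 1; omega
    have hq3 : (1 / 8 : ℝ) ≤ q ^ 3 := by
      calc (1 / 8 : ℝ) = (1 / 2) ^ 3 := by norm_num
        _ ≤ q ^ 3 := pow_le_pow_left₀ (by norm_num) hq2 3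
    have hpos : (0:ℝ) ≤ q ^ (2 * N - 3) := pow_nonneg hq0 _
    have h64 : (1 : ℝ) ≤ 64 * (N : ℝ) * q ^ 3 := by
      nlinarith [mul_nonneg (sub_nonneg.2 hN1) (sub_nonneg.2 hq3)]
    calc q ^ (2 * N - 3) = 1 * q ^ (2 * N - 3) := (one_mul _).symm
      _ ≤ (64 * N * q ^ 3) * q ^ (2 * N - 3) := mul_le_mul_of_nonneg_right h64 hpos
      _ = 64 * N * q ^ (2 * N) := by rw [e]; ring
  have hb2 : 4 * N * q ^ (2 * N - 4) ≤ 64 * N * q ^ (2 * N) := by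
    have e : q ^ (2 * N) = q ^ 4 * q ^ (2 * N - 4) := by
      rw [← pow_add]; congr 1; omega
    have hq4 : (1 / 16 : ℝ) ≤ q ^ 4 := by
      calc (1 / 16 : ℝ) = (1 / 2) ^ 4 := by norm_num
        _ ≤ q ^ 4 := pow_le_pow_left₀ (by norm_num) hq2 4
    have hpos : (0:ℝ) ≤ q ^ (2 * N - 4) := pow_nonneg hq0 _
    have h44 : (4 : ℝ) ≤ 64 * q ^ 4 := by nlinarith
    have hNX : (0:ℝ) ≤ (N : ℝ) * q ^ (2 * N - 4) := mul_nonneg (by linarith) hpos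
    calc 4 * N * q ^ (2 * N - 4) = 4 * ((N : ℝ) * q ^ (2 * N - 4)) := by ring
      _ ≤ (64 * q ^ 4) * ((N : ℝ) * q ^ (2 * N - 4)) := mul_le_mul_of_nonneg_right h44 hNX
      _ = 64 * N * q ^ (2 * N) := by rw [e]; ring
  rw [abs_le]
  constructor
  · linarith
  · linarith

lemma eventual_smallness {q : ℝ} (hq0 : 0 ≤ q) (hq1 : q < 1) :
    ∃ M : ℕ, ∀ N : ℕ, M ≤ N → (N : ℝ) * q ^ (N / 2 - 2) ≤ 1 / 2 := by
  have h1 : Filter.Tendsto (fun j : ℕ => (j : ℝ) * q ^ j) Filter.atTop (nhds 0) := by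
    have := (summable_pow_mul_geometric_of_norm_lt_one (R := ℝ) 1
      (by rwa [Real.norm_eq_abs, abs_of_nonneg hq0])).tendsto_atTop_zero
    simpa using this
  have h2 : Filter.Tendsto (fun j : ℕ => q ^ j) Filter.atTop (nhds 0) :=
    tendsto_pow_atTop_nhds_zero_of_lt_one hq0 hq1
  have ht : Filter.Tendsto (fun j : ℕ => (2 * (j : ℝ) + 8) * q ^ j)
      Filter.atTop (nhds 0) := by
    have := ((h1.const_mul 2).add (h2.const_mul 8))
    simp only [mul_zero, add_zero] at this
    convert this using 2 with j
    ring
  have hev : ∀ᶠ j : ℕ in Filter.atTop, (2 * (j : ℝ) + 8) * q ^ j ≤ 1 / 2 :=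
    ht.eventually (eventually_le_nhds (by norm_num))
  obtain ⟨M, hM⟩ := Filter.eventually_atTop.1 hev
  refine ⟨2 * M + 12, fun N hN => ?_⟩
  set j : ℕ := N / 2 - 2 with hj
  have hjM : M ≤ j := by omega
  have hNle : (N : ℝ) ≤ 2 * (j : ℝ) + 8 := by
    have : N ≤ 2 * j + 8 := by omega
    exact_mod_cast this
  calc (N : ℝ) * q ^ j ≤ (2 * (j : ℝ) + 8) * q ^ j :=
        mul_le_mul_of_nonneg_right hNle (pow_nonneg hq0 _)
    _ ≤ 1 / 2 := hM j hjM

lemma global_of_eventually {g h : ℕ → ℝ} (hh : ∀ n, 0 < h n) (M : ℕ)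
    (hev : ∀ n, M ≤ n → |g n| ≤ 64 * h n) :
    ∃ C : ℝ, 0 < C ∧ ∀ n, |g n| ≤ C * h n := by
  have hsum0 : 0 ≤ ∑ i ∈ Finset.range M, |g i| / h i :=
    Finset.sum_nonneg fun i _ => div_nonneg (abs_nonneg _) (hh i).le
  refine ⟨65 + ∑ i ∈ Finset.range M, |g i| / h i, by linarith, fun n => ?_⟩
  rcases le_or_gt M n with h1 | h1
  · calc |g n| ≤ 64 * h n := hev n h1
      _ ≤ (65 + ∑ i ∈ Finset.range M, |g i| / h i) * h n := by nlinarith [hh n]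
  · have hterm : |g n| / h n ≤ ∑ i ∈ Finset.range M, |g i| / h i :=
      Finset.single_le_sum (f := fun i => |g i| / h i)
        (fun i _ => div_nonneg (abs_nonneg _) (hh i).le) (Finset.mem_range.2 h1)
    calc |g n| = (|g n| / h n) * h n := (div_mul_cancel₀ _ (hh n).ne').symm
      _ ≤ (65 + ∑ i ∈ Finset.range M, |g i| / h i) * h n := by
          apply mul_le_mul_of_nonneg_right _ (hh n).le
          linarith
end GnpAux

/-- Fix `p ∈ (0,1]` and distinct vertices `s, a` of `⃗G(n,p)` (graphs
on `n + 2 ≥ 2` vertices). Then `P(s ↛ a) = 2(1-p/2)^(n-1) + O(n (1-p/2)^(2n))`;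
in particular `P(s ↛ a)/(1-p/2)^(n-1) → 2`. -/
theorem gnp_not_reach_asymp
    (p : ℝ) (hp : p ∈ Set.Ioc (0 : ℝ) 1)
    (s a : (n : ℕ) → Fin (n + 2)) (hsa : ∀ n, s n ≠ a n) :
    (∃ C : ℝ, 0 < C ∧ ∀ n : ℕ,
        |PrGnp (n + 2) p {f | ¬ Reaches f (s n) (a n)} - 2 * (1 - p / 2) ^ (n + 1)| ≤
          C * ((n : ℝ) + 2) * (1 - p / 2) ^ (2 * (n + 2))) ∧
    Filter.Tendsto (fun n : ℕ =>
        PrGnp (n + 2) p {f | ¬ Reaches f (s n) (a n)} / (1 - p / 2) ^ (n + 1))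
      Filter.atTop (nhds 2) := by

  classical
  set q : ℝ := 1 - p / 2 with hq
  have hq0 : 0 ≤ q := by rw [hq]; linarith [hp.2]
  have hq2 : 1 / 2 ≤ q := by rw [hq]; linarith [hp.2]
  have hqlt : q < 1 := by rw [hq]; linarith [hp.1]
  have hqpos : 0 < q := lt_of_lt_of_le (by norm_num) hq2
  set P : ℕ → ℝ := fun n => PrGnp (n + 2) p {f | ¬ Reaches f (s n) (a n)} with hP
  obtain ⟨M, hM⟩ := GnpAux.eventual_smallness hq0 hqlt
  have hpos : ∀ n : ℕ, 0 < ((n : ℝ) + 2) * q ^ (2 * (n + 2)) :=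
    fun n => mul_pos (by positivity) (pow_pos hqpos _)
  have key : ∃ C : ℝ, 0 < C ∧ ∀ n : ℕ,
      |P n - 2 * q ^ (n + 1)| ≤ C * (((n : ℝ) + 2) * q ^ (2 * (n + 2))) := by
    apply GnpAux.global_of_eventually hpos (M + 12)
    intro n hn
    have hN : 12 ≤ n + 2 := by omega
    have hyn : ((n + 2 : ℕ) : ℝ) * q ^ ((n + 2) / 2 - 2) ≤ 1 / 2 := hM (n + 2) (by omega)
    have hest := GnpAux.full_estimate (N := n + 2) p hp (hsa n) hN (by rw [← hq]; exact_mod_cast hyn)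
    rw [← hq] at hest
    have h1 : (n + 2) - 1 = n + 1 := rfl
    rw [h1] at hest
    calc |P n - 2 * q ^ (n + 1)| ≤ 64 * ((n + 2 : ℕ) : ℝ) * q ^ (2 * (n + 2)) := hest
      _ = 64 * (((n : ℝ) + 2) * q ^ (2 * (n + 2))) := by push_cast; ring
  obtain ⟨C, hC, hbound⟩ := key
  constructor
  · exact ⟨C, hC, fun n => by rw [mul_assoc]; exact hbound n⟩
  · have h1 : Filter.Tendsto (fun j : ℕ => (j : ℝ) * q ^ j) Filter.atTop (nhds 0) := by
      have := (summable_pow_mul_geometric_of_norm_lt_one (R := ℝ) 1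
        (by rwa [Real.norm_eq_abs, abs_of_nonneg hq0])).tendsto_atTop_zero
      simpa using this
    have h2 : Filter.Tendsto (fun j : ℕ => q ^ j) Filter.atTop (nhds 0) :=
      tendsto_pow_atTop_nhds_zero_of_lt_one hq0 hqlt
    have hl : Filter.Tendsto (fun n : ℕ => ((n : ℝ) + 2) * q ^ (n + 3))
        Filter.atTop (nhds 0) := by
      have := (h1.const_mul (q ^ 3)).add (h2.const_mul (2 * q ^ 3))
      simp only [mul_zero, add_zero] at this
      convert this using 2 with n
      ring
    have herr : Filter.Tendsto (fun n : ℕ => (P n - 2 * q ^ (n + 1)) / q ^ (n + 1))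
        Filter.atTop (nhds 0) := by
      have hnorm : ∀ n : ℕ, ‖(P n - 2 * q ^ (n + 1)) / q ^ (n + 1)‖ ≤
          C * (((n : ℝ) + 2) * q ^ (n + 3)) := by
        intro n
        have hq1pos : (0:ℝ) < q ^ (n + 1) := pow_pos hqpos _
        rw [Real.norm_eq_abs, abs_div, abs_of_pos hq1pos, div_le_iff₀ hq1pos]
        have hsplit : q ^ (2 * (n + 2)) = q ^ (n + 1) * q ^ (n + 3) := by
          rw [← pow_add]; congr 1; omega
        calc |P n - 2 * q ^ (n + 1)| ≤ C * (((n : ℝ) + 2) * q ^ (2 * (n + 2))) := hbound n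
          _ = C * (((n : ℝ) + 2) * q ^ (n + 3)) * q ^ (n + 1) := by rw [hsplit]; ring
      exact squeeze_zero_norm hnorm (by simpa using hl.const_mul C)
    have heq : (fun n : ℕ => P n / q ^ (n + 1)) =
        fun n : ℕ => 2 + (P n - 2 * q ^ (n + 1)) / q ^ (n + 1) := by
      funext n
      have hq1pos : (0:ℝ) < q ^ (n + 1) := pow_pos hqpos _
      field_simp
      ring
    rw [show (fun n : ℕ =>
        PrGnp (n + 2) p {f | ¬ Reaches f (s n) (a n)} / (1 - p / 2) ^ (n + 1)) =
        (fun n : ℕ => P n / q ^ (n + 1)) from rfl, heq]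
    simpa using (tendsto_const_nhds (x := (2:ℝ)) (f := Filter.atTop (α := ℕ))).add herr
end

section
/- Let 0 ≤ p ≤ 1, y := 1 − p/2, and let s, b be two fixed distinct vertices of ⃗G(n,p) with n ≥ 2. Then f_n(p) := P_{⃗G(n,p)}(s↛b) satisfies f_n(p) = Σ_{k=1}^{n−1} C(n−2, k−1)·d_p(k,k)·y^{k(n−k)}. -/
open Filter Real

section
variable {m n : ℕ}

def sedge (u v : Fin m) (h : u ≠ v) : Edge m :=
  if h' : u < v then ⟨(u, v), h'⟩ else ⟨(v, u), h.lt_or_gt.resolve_left h'⟩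

lemma sedge_pos {u v : Fin m} (h : u ≠ v) (h' : u < v) : sedge u v h = ⟨(u, v), h'⟩ :=
  dif_pos h'

lemma sedge_neg {u v : Fin m} (h : u ≠ v) (h' : v < u) : sedge u v h = ⟨(v, u), h'⟩ := by
  rw [sedge, dif_neg (asymm h')]

lemma sedge_fst {u v : Fin m} (h : u ≠ v) :
    (sedge u v h).1 = if u < v then (u, v) else (v, u) := by
  rcases h.lt_or_gt with h' | h'
  · rw [sedge_pos h h', if_pos h']
  · rw [sedge_neg h h', if_neg (asymm h')]

lemma sedge_comm {u v : Fin m} (h : u ≠ v) : sedge u v h = sedge v u h.symm := by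
  rcases h.lt_or_gt with h' | h'
  · rw [sedge_pos h h', sedge_neg h.symm h']
  · rw [sedge_neg h h', sedge_pos h.symm h']

lemma sedge_self (e : Edge m) : sedge e.1.1 e.1.2 (ne_of_lt e.2) = e := by
  rw [sedge_pos _ e.2]

lemma dirEdge_iff (f : Config m) {u v : Fin m} (h : u ≠ v) :
    DirEdge f u v ↔ f (sedge u v h) = some (decide (u < v)) := by
  rcases h.lt_or_gt with h' | h'
  · rw [sedge_pos h h', decide_eq_true h']
    constructor
    · rintro (⟨h2, hf⟩ | ⟨h2, hf⟩)
      · exact hf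
      · exact absurd h2 (asymm h')
    · exact fun hf => Or.inl ⟨h', hf⟩
  · rw [sedge_neg h h', decide_eq_false (asymm h')]
    constructor
    · rintro (⟨h2, hf⟩ | ⟨h2, hf⟩)
      · exact absurd h2 (asymm h')
      · exact hf
    · exact fun hf => Or.inr ⟨h', hf⟩

lemma dirEdge_irrefl (f : Config m) (u : Fin m) : ¬ DirEdge f u u := by
  rintro (⟨h, _⟩ | ⟨h, _⟩) <;> exact lt_irrefl _ h

lemma decide_lt_symm {u v : Fin m} (h : u ≠ v) : decide (v < u) = !decide (u < v) := by
  rcases h.lt_or_gt with h' | h' <;> simp [h', asymm h']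

lemma sum_optionBool (f : Option Bool → ℝ) :
    ∑ x : Option Bool, f x = f none + (f (some false) + f (some true)) := by
  rw [show (Finset.univ : Finset (Option Bool)) = {none, some false, some true} by decide]
  simp [Finset.sum_insert, Finset.mem_insert]

variable (X : Finset (Fin n)) (φ : Fin m ≃ {x : Fin n // x ∈ X})

def jmap : Fin m → Fin n := fun a => (φ a : Fin n)

lemma jmap_inj : Function.Injective (jmap X φ) := fun a b h => φ.injective (Subtype.ext h)

lemma jmap_mem (a : Fin m) : jmap X φ a ∈ X := (φ a).2

abbrev InE : Type _ := {e : Edge n // e.1.1 ∈ X ∧ e.1.2 ∈ X}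

def pushE (e : Edge m) : Edge n :=
  sedge (jmap X φ e.1.1) (jmap X φ e.1.2) ((jmap_inj X φ).ne (ne_of_lt e.2))

lemma pushE_mem (e : Edge m) : (pushE X φ e).1.1 ∈ X ∧ (pushE X φ e).1.2 ∈ X := by
  rw [pushE]
  rcases ((jmap_inj X φ).ne (ne_of_lt e.2)).lt_or_gt with h' | h'
  · rw [sedge_pos _ h']; exact ⟨jmap_mem X φ _, jmap_mem X φ _⟩
  · rw [sedge_neg _ h']; exact ⟨jmap_mem X φ _, jmap_mem X φ _⟩

lemma symm_ne {u v : Fin n} (hu : u ∈ X) (hv : v ∈ X) (h : u ≠ v) :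
    φ.symm ⟨u, hu⟩ ≠ φ.symm ⟨v, hv⟩ := fun he => h (by
  have := congrArg (fun z => ((φ z : {x // x ∈ X}) : Fin n)) he
  simpa using this)

noncomputable def pushCfg (f1 : InE X → Option Bool) : Config m := fun e =>
  (f1 ⟨pushE X φ e, pushE_mem X φ e⟩).map fun t =>
    decide (jmap X φ e.1.1 < jmap X φ e.1.2) == t

noncomputable def pullCfg (g : Config m) : InE X → Option Bool := fun e =>
  (g (sedge (φ.symm ⟨e.1.1.1, e.2.1⟩) (φ.symm ⟨e.1.1.2, e.2.2⟩)
      (symm_ne X φ _ _ (ne_of_lt e.1.2)))).map fun t =>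
    decide (φ.symm ⟨e.1.1.1, e.2.1⟩ < φ.symm ⟨e.1.1.2, e.2.2⟩) == t

lemma beq_comp (c d : Bool) :
    ((fun t => c == t) ∘ fun t => d == t) = fun t : Bool => (c == d) == t := by
  funext t; cases c <;> cases d <;> cases t <;> rfl

lemma map_beq_beq (c d : Bool) (o : Option Bool) :
    ((o.map fun t => d == t).map fun t => c == t) = o.map fun t => (c == d) == t := by
  rw [Option.map_map, beq_comp]

lemma map_beq_self (c : Bool) (o : Option Bool) : (o.map fun t => (c == c) == t) = o := by
  cases o with
  | none => rfl
  | some t => simp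

lemma edgeWeight_map (p : ℝ) (g : Bool → Bool) (o : Option Bool) :
    edgeWeight p (o.map g) = edgeWeight p o := by
  cases o <;> rfl

-- push/pull roundtrips
lemma push_pull (g : Config m) : pushCfg X φ (pullCfg X φ g) = g := by
  funext e
  obtain ⟨⟨a, b⟩, hab⟩ := e
  have hne : jmap X φ a ≠ jmap X φ b := (jmap_inj X φ).ne (ne_of_lt hab)
  simp only [pushCfg]
  rcases hne.lt_or_gt with hj | hj
  · have hE : (⟨pushE X φ ⟨(a,b),hab⟩, pushE_mem X φ _⟩ : InE X)
        = ⟨⟨(jmap X φ a, jmap X φ b), hj⟩, jmap_mem X φ a, jmap_mem X φ b⟩ := by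
      apply Subtype.ext; apply Subtype.ext
      simp [pushE, sedge_fst, hj]
    rw [hE]
    simp only [pullCfg, jmap, Subtype.coe_eta, Equiv.symm_apply_apply]
    rw [sedge_pos _ hab, map_beq_beq]
    have hj' : φ a < φ b := Subtype.coe_lt_coe.mp hj
    simp [hab, hj']
  · have hE : (⟨pushE X φ ⟨(a,b),hab⟩, pushE_mem X φ _⟩ : InE X)
        = ⟨⟨(jmap X φ b, jmap X φ a), hj⟩, jmap_mem X φ b, jmap_mem X φ a⟩ := by
      apply Subtype.ext; apply Subtype.ext
      simp [pushE, sedge_fst, asymm hj]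
    rw [hE]
    simp only [pullCfg, jmap, Subtype.coe_eta, Equiv.symm_apply_apply]
    rw [sedge_comm, sedge_pos _ hab, map_beq_beq]
    have hj' : φ b < φ a := Subtype.coe_lt_coe.mp hj
    simp [asymm hab, asymm hj']


lemma pull_push (f1 : InE X → Option Bool) : pullCfg X φ (pushCfg X φ f1) = f1 := by
  funext e
  obtain ⟨⟨⟨u, v⟩, huv⟩, hu, hv⟩ := e
  simp only [pullCfg]
  set a := φ.symm ⟨u, hu⟩ with ha
  set b := φ.symm ⟨v, hv⟩ with hb
  have hne : a ≠ b := symm_ne X φ hu hv (ne_of_lt huv)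
  have hju : jmap X φ a = u := by rw [ha]; simp [jmap]
  have hjv : jmap X φ b = v := by rw [hb]; simp [jmap]
  rcases hne.lt_or_gt with h | h
  · rw [sedge_pos _ h]
    simp only [pushCfg]
    have hE : (⟨pushE X φ ⟨(a, b), h⟩, pushE_mem X φ _⟩ : InE X)
        = ⟨⟨(u, v), huv⟩, hu, hv⟩ := by
      apply Subtype.ext; apply Subtype.ext
      simp [pushE, sedge_fst, hju, hjv, huv]
    rw [hE, map_beq_beq]
    simp [hju, hjv, huv, h, show φ.symm ⟨u, hu⟩ < φ.symm ⟨v, hv⟩ from h]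
  · rw [sedge_neg _ h]
    simp only [pushCfg]
    have hE : (⟨pushE X φ ⟨(b, a), h⟩, pushE_mem X φ _⟩ : InE X)
        = ⟨⟨(u, v), huv⟩, hu, hv⟩ := by
      apply Subtype.ext; apply Subtype.ext
      simp [pushE, sedge_fst, hju, hjv, asymm huv]
    rw [hE, map_beq_beq]
    simp [hju, hjv, asymm huv, asymm h, asymm (show φ.symm ⟨v, hv⟩ < φ.symm ⟨u, hu⟩ from h)]

def pullE (e : InE X) : Edge m :=
  sedge (φ.symm ⟨e.1.1.1, e.2.1⟩) (φ.symm ⟨e.1.1.2, e.2.2⟩)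
    (symm_ne X φ _ _ (ne_of_lt e.1.2))

lemma pullE_pushE (e : Edge m) : pullE X φ ⟨pushE X φ e, pushE_mem X φ e⟩ = e := by
  obtain ⟨⟨a, b⟩, hab⟩ := e
  have hne : jmap X φ a ≠ jmap X φ b := (jmap_inj X φ).ne (ne_of_lt hab)
  rcases hne.lt_or_gt with hj | hj
  · have hE : (⟨pushE X φ ⟨(a,b),hab⟩, pushE_mem X φ _⟩ : InE X)
        = ⟨⟨(jmap X φ a, jmap X φ b), hj⟩, jmap_mem X φ a, jmap_mem X φ b⟩ := by
      apply Subtype.ext; apply Subtype.ext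
      simp [pushE, sedge_fst, hj]
    rw [hE]
    apply Subtype.ext
    have hj' : φ a < φ b := Subtype.coe_lt_coe.mp hj
    simp [pullE, sedge_fst, jmap, hab, hj']
  · have hE : (⟨pushE X φ ⟨(a,b),hab⟩, pushE_mem X φ _⟩ : InE X)
        = ⟨⟨(jmap X φ b, jmap X φ a), hj⟩, jmap_mem X φ b, jmap_mem X φ a⟩ := by
      apply Subtype.ext; apply Subtype.ext
      simp [pushE, sedge_fst, asymm hj]
    rw [hE]
    apply Subtype.ext
    have hj' : φ b < φ a := Subtype.coe_lt_coe.mp hj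
    simp [pullE, sedge_fst, jmap, asymm hab, asymm hj']

lemma pushE_pullE (e : InE X) :
    (⟨pushE X φ (pullE X φ e), pushE_mem X φ _⟩ : InE X) = e := by
  obtain ⟨⟨⟨u, v⟩, huv⟩, hu, hv⟩ := e
  set a := φ.symm ⟨u, hu⟩ with ha
  set b := φ.symm ⟨v, hv⟩ with hb
  have hne : a ≠ b := symm_ne X φ hu hv (ne_of_lt huv)
  have hju : jmap X φ a = u := by rw [ha]; simp [jmap]
  have hjv : jmap X φ b = v := by rw [hb]; simp [jmap]
  rcases hne.lt_or_gt with h | h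
  · have hP : pullE X φ ⟨⟨(u, v), huv⟩, hu, hv⟩ = ⟨(a, b), h⟩ := by
      apply Subtype.ext
      show (sedge a b _).1 = _
      simp [sedge_fst, h]
    rw [hP]
    apply Subtype.ext; apply Subtype.ext
    simp [pushE, sedge_fst, hju, hjv, huv]
  · have hP : pullE X φ ⟨⟨(u, v), huv⟩, hu, hv⟩ = ⟨(b, a), h⟩ := by
      apply Subtype.ext
      show (sedge a b _).1 = _
      simp [sedge_fst, asymm h]
    rw [hP]
    apply Subtype.ext; apply Subtype.ext
    simp [pushE, sedge_fst, hju, hjv, asymm huv]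

noncomputable def edgeEquiv : Edge m ≃ InE X :=
  ⟨fun e => ⟨pushE X φ e, pushE_mem X φ e⟩, pullE X φ, pullE_pushE X φ, pushE_pullE X φ⟩

lemma dirEdge_pushCfg (f : Config n) {a b : Fin m} (hab : a ≠ b) :
    DirEdge (pushCfg X φ fun e => f e.1) a b ↔ DirEdge f (jmap X φ a) (jmap X φ b) := by
  have hne : jmap X φ a ≠ jmap X φ b := (jmap_inj X φ).ne hab
  rw [dirEdge_iff _ hab, dirEdge_iff f hne]
  rcases hab.lt_or_gt with h | h
  · rw [sedge_pos hab h]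
    show Option.map (fun t => decide (jmap X φ a < jmap X φ b) == t)
        (f (pushE X φ ⟨(a, b), h⟩)) = some (decide (a < b)) ↔
      f (sedge (jmap X φ a) (jmap X φ b) hne) = some (decide (jmap X φ a < jmap X φ b))
    have hpe : pushE X φ ⟨(a, b), h⟩ = sedge (jmap X φ a) (jmap X φ b) hne := rfl
    rw [hpe]
    rcases ho : f (sedge (jmap X φ a) (jmap X φ b) hne) with _ | t
    · simp
    · simp [h, Bool.beq_eq_decide_eq, eq_comm]
  · rw [sedge_neg hab h]
    show Option.map (fun t => decide (jmap X φ b < jmap X φ a) == t)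
        (f (pushE X φ ⟨(b, a), h⟩)) = some (decide (a < b)) ↔
      f (sedge (jmap X φ a) (jmap X φ b) hne) = some (decide (jmap X φ a < jmap X φ b))
    have hpe : pushE X φ ⟨(b, a), h⟩ = sedge (jmap X φ a) (jmap X φ b) hne := by
      rw [pushE]; exact (sedge_comm _).symm
    rw [hpe]
    rcases ho : f (sedge (jmap X φ a) (jmap X φ b) hne) with _ | t
    · rw [Option.map_none]
      constructor <;> (intro hcon; exact absurd hcon (by simp))
    · rw [Option.map_some]
      rw [decide_lt_symm hne]
      constructor
      · intro hsome
        have h2 : ((!decide (jmap X φ a < jmap X φ b)) == t) = decide (a < b) :=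
          Option.some.inj hsome
        have h3 : decide (a < b) = false := by simp [asymm h]
        rw [h3] at h2
        cases t <;> revert h2 <;> cases hd : decide (jmap X φ a < jmap X φ b) <;> simp
      · intro hsome
        have h2 : t = decide (jmap X φ a < jmap X φ b) := Option.some.inj hsome
        subst h2
        have h3 : decide (a < b) = false := by simp [asymm h]
        rw [h3]
        cases hd : decide (jmap X φ a < jmap X φ b) <;> simp


lemma reaches_pushCfg (f : Config n) {u v : Fin n} (hu : u ∈ X) (hv : v ∈ X) :
    Relation.ReflTransGen (fun a b => a ∈ X ∧ b ∈ X ∧ DirEdge f a b) u v ↔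
      Reaches (pushCfg X φ fun e => f e.1) (φ.symm ⟨u, hu⟩) (φ.symm ⟨v, hv⟩) := by
  constructor
  · intro h
    have key := Relation.ReflTransGen.lift (p := DirEdge (pushCfg X φ fun e => f e.1))
      (fun w => if hw : w ∈ X then φ.symm ⟨w, hw⟩ else φ.symm ⟨u, hu⟩)
      (fun a b hab => ?_) _ _ h
    · simpa [Function.onFun, Reaches, hu, hv] using key
    · obtain ⟨ha, hb2, hd⟩ := hab
      have hne : a ≠ b := fun hEq => dirEdge_irrefl f a (hEq ▸ hd)
      simp only [Function.onFun, ha, hb2, dite_true]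
      refine (dirEdge_pushCfg X φ f (symm_ne X φ ha hb2 hne)).mpr ?_
      simpa [jmap] using hd
  · intro h
    have key := Relation.ReflTransGen.lift (p := fun a b => a ∈ X ∧ b ∈ X ∧ DirEdge f a b) (jmap X φ) (fun a b hab => ?_) _ _ h
    · simpa [Function.onFun, jmap, hu, hv] using key
    · have hne : a ≠ b := by rintro rfl; exact dirEdge_irrefl _ a hab
      exact ⟨jmap_mem X φ a, jmap_mem X φ b, (dirEdge_pushCfg X φ f hne).mp hab⟩

end

section
variable {n : ℕ}

lemma cluster_eq_iff (f : Config n) (s : Fin n) (X : Finset (Fin n)) (hs : s ∈ X) :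
    {u | Reaches f s u} = (X : Set (Fin n)) ↔
      (∀ u ∈ X, ∀ v, DirEdge f u v → v ∈ X) ∧
        ∀ u ∈ X, Relation.ReflTransGen (fun a b => a ∈ X ∧ b ∈ X ∧ DirEdge f a b) s u := by
  constructor
  · intro h
    have hmem : ∀ w, Reaches f s w ↔ w ∈ X := fun w => by
      rw [← Finset.mem_coe, ← h]; exact Iff.rfl
    constructor
    · intro u hu v hd
      exact (hmem v).mp (Relation.ReflTransGen.tail ((hmem u).mpr hu) hd)
    · intro u hu
      have hru : Reaches f s u := (hmem u).mpr hu
      clear hu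
      induction hru with
      | refl => exact Relation.ReflTransGen.refl
      | tail hab hd ih =>
        rename_i b' c'
        exact ih.tail ⟨(hmem b').mp hab, (hmem c').mp (Relation.ReflTransGen.tail hab hd), hd⟩
  · rintro ⟨hclosed, hall⟩
    ext u
    simp only [Set.mem_setOf_eq, Finset.coe_sort_coe, Finset.mem_coe]
    constructor
    · intro hru
      induction hru with
      | refl => exact hs
      | tail hab hd ih => exact hclosed _ ih _ hd
    · intro hu
      exact Relation.ReflTransGen.mono (r := fun a b => a ∈ X ∧ b ∈ X ∧ DirEdge f a b) (fun a b hab => hab.2.2) _ _ (hall u hu)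

def allowed (X : Finset (Fin n)) (e : Edge n) (o : Option Bool) : Prop :=
  (e.1.1 ∉ X ∨ e.1.2 ∈ X ∨ o ≠ some true) ∧ (e.1.2 ∉ X ∨ e.1.1 ∈ X ∨ o ≠ some false)

instance (X : Finset (Fin n)) (e : Edge n) (o : Option Bool) : Decidable (allowed X e o) := by
  unfold allowed; infer_instance

lemma closed_iff (f : Config n) (X : Finset (Fin n)) :
    (∀ u ∈ X, ∀ v, DirEdge f u v → v ∈ X) ↔ ∀ e : Edge n, allowed X e (f e) := by
  constructor
  · intro h e
    constructor
    · by_contra hcon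
      push_neg at hcon
      obtain ⟨h1, h2, h3⟩ := hcon
      exact h2 (h _ h1 _ (Or.inl ⟨e.2, h3⟩))
    · by_contra hcon
      push_neg at hcon
      obtain ⟨h1, h2, h3⟩ := hcon
      exact h2 (h _ h1 _ (Or.inr ⟨e.2, h3⟩))
  · intro h u hu v hd
    rcases hd with ⟨hlt, hf⟩ | ⟨hlt, hf⟩
    · by_contra hv
      rcases (h ⟨(u, v), hlt⟩).1 with h1 | h1 | h1
      · exact h1 hu
      · exact hv h1
      · exact h1 hf
    · by_contra hv
      rcases (h ⟨(v, u), hlt⟩).2 with h1 | h1 | h1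
      · exact h1 hu
      · exact hv h1
      · exact h1 hf

end


noncomputable def W {n : ℕ} (p : ℝ) : Config n → ℝ := fun f => ∏ e : Edge n, edgeWeight p (f e)


section
variable {n : ℕ}

lemma cross_card (X : Finset (Fin n)) :
    (Finset.univ.filter fun e : {e : Edge n // ¬((e : Edge n).1.1 ∈ X ∧ (e : Edge n).1.2 ∈ X)} =>
        ((e : Edge n).1.1 ∈ X ∨ (e : Edge n).1.2 ∈ X)).card
      = X.card * (Finset.univ \ X).card := by
  classical
  rw [← Finset.card_product]
  apply Finset.card_bij
    (fun (e : {e : Edge n // ¬((e : Edge n).1.1 ∈ X ∧ (e : Edge n).1.2 ∈ X)}) _ =>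
      if (e : Edge n).1.1 ∈ X
      then ((e : Edge n).1.1, (e : Edge n).1.2) else ((e : Edge n).1.2, (e : Edge n).1.1))
  · intro e he
    rw [Finset.mem_filter] at he
    by_cases h1 : (e : Edge n).1.1 ∈ X
    · have h2 : (e : Edge n).1.2 ∉ X := fun h2 => e.2 ⟨h1, h2⟩
      rw [if_pos h1, Finset.mem_product]
      exact ⟨h1, Finset.mem_sdiff.mpr ⟨Finset.mem_univ _, h2⟩⟩
    · have h2 : (e : Edge n).1.2 ∈ X := he.2.resolve_left h1
      rw [if_neg h1, Finset.mem_product]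
      exact ⟨h2, Finset.mem_sdiff.mpr ⟨Finset.mem_univ _, h1⟩⟩
  · intro e1 h1 e2 h2 hi
    by_cases m1 : (e1 : Edge n).1.1 ∈ X <;> by_cases m2 : (e2 : Edge n).1.1 ∈ X
    · rw [if_pos m1, if_pos m2] at hi
      apply Subtype.ext; apply Subtype.ext
      have ha := congrArg Prod.fst hi
      have hb := congrArg Prod.snd hi
      simp only at ha hb
      exact Prod.ext ha hb
    · rw [if_pos m1, if_neg m2] at hi
      have ha := congrArg Prod.fst hi
      have hb := congrArg Prod.snd hi
      simp only at ha hb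
      -- e1 = (u,v) u<v, e2 = (u',v') u'<v', u = v', v = u': contradiction with orders
      have o1 := (e1 : Edge n).2
      have o2 := (e2 : Edge n).2
      rw [ha, hb] at o1
      exact absurd (o1.trans o2) (lt_irrefl _)
    · rw [if_neg m1, if_pos m2] at hi
      have ha := congrArg Prod.fst hi
      have hb := congrArg Prod.snd hi
      simp only at ha hb
      have o1 := (e1 : Edge n).2
      have o2 := (e2 : Edge n).2
      rw [← ha, ← hb] at o2
      exact absurd (o1.trans o2) (lt_irrefl _)
    · rw [if_neg m1, if_neg m2] at hi
      have ha := congrArg Prod.fst hi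
      have hb := congrArg Prod.snd hi
      simp only at ha hb
      apply Subtype.ext; apply Subtype.ext
      exact Prod.ext hb ha
  · intro q hq
    rw [Finset.mem_product, Finset.mem_sdiff] at hq
    obtain ⟨hq1, _, hq2⟩ := hq
    have hne : q.1 ≠ q.2 := fun h => hq2 (h ▸ hq1)
    have hP : ¬((sedge q.1 q.2 hne).1.1 ∈ X ∧ (sedge q.1 q.2 hne).1.2 ∈ X) := by
      rcases hne.lt_or_gt with h | h
      · rw [sedge_pos hne h]; exact fun hc => hq2 hc.2
      · rw [sedge_neg hne h]; exact fun hc => hq2 hc.1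
    refine ⟨⟨sedge q.1 q.2 hne, hP⟩, ?_, ?_⟩
    · rw [Finset.mem_filter]
      refine ⟨Finset.mem_univ _, ?_⟩
      rcases hne.lt_or_gt with h | h
      · have hv : (sedge q.1 q.2 hne).1 = (q.1, q.2) := by rw [sedge_fst]; exact if_pos h
        rw [show ((⟨sedge q.1 q.2 hne, hP⟩ : {e : Edge n // ¬((e : Edge n).1.1 ∈ X ∧ (e : Edge n).1.2 ∈ X)}) : Edge n).1 = (q.1, q.2) from hv]
        exact Or.inl hq1
      · have hv : (sedge q.1 q.2 hne).1 = (q.2, q.1) := by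
          rw [sedge_fst]; exact if_neg (asymm h)
        rw [show ((⟨sedge q.1 q.2 hne, hP⟩ : {e : Edge n // ¬((e : Edge n).1.1 ∈ X ∧ (e : Edge n).1.2 ∈ X)}) : Edge n).1 = (q.2, q.1) from hv]
        exact Or.inr hq1
    · rcases hne.lt_or_gt with h | h
      · have hv : (sedge q.1 q.2 hne) = ⟨(q.1, q.2), h⟩ := sedge_pos hne h
        simp only [hv]
        rw [if_pos hq1]
      · have hv : (sedge q.1 q.2 hne) = ⟨(q.2, q.1), h⟩ := sedge_neg hne h
        simp only [hv]
        rw [if_neg hq2]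

lemma count_X (s b : Fin n) (hsb : s ≠ b) (k : ℕ) :
    ((Finset.univ.filter fun X : Finset (Fin n) => s ∈ X ∧ b ∉ X).filter
        fun X => X.card = k + 1).card = (n - 2).choose k := by
  classical
  have hcard2 : (Finset.univ \ ({s, b} : Finset (Fin n))).card = n - 2 := by
    rw [Finset.card_sdiff_of_subset (Finset.subset_univ _), Finset.card_univ, Fintype.card_fin,
      Finset.card_pair hsb]
  rw [← hcard2, ← Finset.card_powersetCard]
  apply Finset.card_bij (fun X _ => X.erase s)
  · intro X hX
    simp only [Finset.mem_filter] at hX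
    obtain ⟨⟨_, hsX, hbX⟩, hc⟩ := hX
    rw [Finset.mem_powersetCard]
    constructor
    · intro x hx
      rw [Finset.mem_erase] at hx
      rw [Finset.mem_sdiff]
      refine ⟨Finset.mem_univ _, ?_⟩
      rw [Finset.mem_insert, Finset.mem_singleton]
      push_neg
      exact ⟨hx.1, fun h => hbX (h ▸ hx.2)⟩
    · rw [Finset.card_erase_of_mem hsX, hc]; omega
  · intro X1 h1 X2 h2 he
    simp only [Finset.mem_filter] at h1 h2
    have hrec : insert s (X1.erase s) = insert s (X2.erase s) := by rw [he]
    rwa [Finset.insert_erase h1.1.2.1, Finset.insert_erase h2.1.2.1] at hrec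
  · intro Y hY
    rw [Finset.mem_powersetCard] at hY
    have hsY : s ∉ Y := fun h => by
      have := hY.1 h
      rw [Finset.mem_sdiff] at this
      exact this.2 (Finset.mem_insert_self _ _)
    refine ⟨insert s Y, ?_, ?_⟩
    · simp only [Finset.mem_filter]
      refine ⟨⟨Finset.mem_univ _, Finset.mem_insert_self _ _, ?_⟩, ?_⟩
      · intro hbmem
        rcases Finset.mem_insert.mp hbmem with h | h
        · exact hsb h.symm
        · have := hY.1 h
          rw [Finset.mem_sdiff] at this
          exact this.2 (by simp)
      · rw [Finset.card_insert_of_notMem hsY, hY.2]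
    · rw [Finset.erase_insert hsY]

end


section
variable {n : ℕ}

lemma edge_sum_allowed (p : ℝ) (X : Finset (Fin n))
    (e : {e : Edge n // ¬((e : Edge n).1.1 ∈ X ∧ (e : Edge n).1.2 ∈ X)}) :
    (∑ o : Option Bool, if allowed X e.1 o then edgeWeight p o else 0)
      = if ((e : Edge n).1.1 ∈ X ∨ (e : Edge n).1.2 ∈ X) then 1 - p / 2 else 1 := by
  classical
  rw [sum_optionBool]
  by_cases h1 : (e : Edge n).1.1 ∈ X <;> by_cases h2 : (e : Edge n).1.2 ∈ X
  · exact absurd ⟨h1, h2⟩ e.2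
  all_goals (simp [allowed, h1, h2, edgeWeight]; try ring)

lemma factor2 (p : ℝ) (X : Finset (Fin n)) :
    (∑ f2 : {e : Edge n // ¬((e : Edge n).1.1 ∈ X ∧ (e : Edge n).1.2 ∈ X)} → Option Bool,
        if (∀ e, allowed X e.1 (f2 e)) then ∏ e, edgeWeight p (f2 e) else 0)
      = (1 - p / 2) ^ (X.card * (Finset.univ \ X).card) := by
  classical
  have step1 : ∀ f2 : {e : Edge n // ¬((e : Edge n).1.1 ∈ X ∧ (e : Edge n).1.2 ∈ X)} → Option Bool,
      (if (∀ e, allowed X e.1 (f2 e)) then ∏ e, edgeWeight p (f2 e) else 0)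
        = ∏ e, (if allowed X e.1 (f2 e) then edgeWeight p (f2 e) else 0) := by
    intro f2
    by_cases h : ∀ e, allowed X e.1 (f2 e)
    · rw [if_pos h]
      exact Finset.prod_congr rfl fun e _ => (if_pos (h e)).symm
    · rw [if_neg h]
      push_neg at h
      obtain ⟨e, he⟩ := h
      exact (Finset.prod_eq_zero (Finset.mem_univ e) (by rw [if_neg he])).symm
  rw [Finset.sum_congr rfl fun f2 _ => step1 f2]
  rw [← Fintype.prod_sum fun (e : {e : Edge n // ¬((e : Edge n).1.1 ∈ X ∧ (e : Edge n).1.2 ∈ X)})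
      (o : Option Bool) => if allowed X e.1 o then edgeWeight p o else 0]
  rw [Finset.prod_congr rfl fun e _ => edge_sum_allowed p X e]
  rw [Finset.prod_ite, Finset.prod_const, Finset.prod_const_one, mul_one, cross_card]

lemma factor1 (p : ℝ) {m : ℕ} (X : Finset (Fin n)) (φ : Fin m ≃ {x : Fin n // x ∈ X})
    (t : Fin m) :
    (∑ f1 : InE X → Option Bool,
        ({f1 : InE X → Option Bool | {w | Reaches (pushCfg X φ f1) t w} = Set.univ}.indicator
          (fun f1 => ∏ e : InE X, edgeWeight p (f1 e)) f1))
      = ∑ g : Config m, ({g : Config m | {u | Reaches g t u} = Set.univ}.indicator (W p) g) := by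
  classical
  rw [← Equiv.sum_comp (⟨pushCfg X φ, pullCfg X φ, pull_push X φ, push_pull X φ⟩ :
      (InE X → Option Bool) ≃ Config m)
    (fun g : Config m => ({g : Config m | {u | Reaches g t u} = Set.univ}.indicator (W p) g))]
  apply Finset.sum_congr rfl
  intro f1 _
  simp only [Equiv.coe_fn_mk]
  have hw : W p (pushCfg X φ f1) = ∏ e : InE X, edgeWeight p (f1 e) := by
    rw [W, ← Equiv.prod_comp (edgeEquiv X φ) (fun e => edgeWeight p (f1 e))]
    apply Finset.prod_congr rfl
    intro e' _
    rw [show pushCfg X φ f1 e' = (f1 (edgeEquiv X φ e')).map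
        (fun t => decide (jmap X φ (e' : Edge m).1.1 < jmap X φ (e' : Edge m).1.2) == t) from rfl]
    rw [edgeWeight_map]
  by_cases hc : {w | Reaches (pushCfg X φ f1) t w} = Set.univ
  · rw [Set.indicator_of_mem
        (s := {g : Config m | {u | Reaches g t u} = Set.univ}) (a := pushCfg X φ f1) hc,
      Set.indicator_of_mem
        (s := {f1 : InE X → Option Bool | {w | Reaches (pushCfg X φ f1) t w} = Set.univ})
        (a := f1) hc, hw]
  · rw [Set.indicator_of_notMem
        (s := {g : Config m | {u | Reaches g t u} = Set.univ}) (a := pushCfg X φ f1) hc,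
      Set.indicator_of_notMem
        (s := {f1 : InE X → Option Bool | {w | Reaches (pushCfg X φ f1) t w} = Set.univ})
        (a := f1) hc]

end


section
variable {n : ℕ}

set_option maxHeartbeats 1600000 in
lemma cluster_sum (p : ℝ) {k : ℕ} (X : Finset (Fin n)) (s : Fin n) (hs : s ∈ X)
    (hcard : X.card = k + 1) (t : Fin (k + 1)) :
    ∑ f : Config n, ({f : Config n | {u | Reaches f s u} = (X : Set (Fin n))}.indicator (W p) f)
      = (∑ g : Config (k + 1),
          ({g : Config (k + 1) | {u | Reaches g t u} = Set.univ}.indicator (W p) g))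
        * (1 - p / 2) ^ ((k + 1) * (n - (k + 1))) := by
  classical
  obtain ⟨φ, hφs⟩ : ∃ φ : Fin (k + 1) ≃ {x : Fin n // x ∈ X}, φ.symm ⟨s, hs⟩ = t := by
    refine ⟨(Equiv.swap t ((X.equivFin.trans (finCongr hcard)) ⟨s, hs⟩)).trans
      (X.equivFin.trans (finCongr hcard)).symm, ?_⟩
    rw [Equiv.symm_trans_apply, Equiv.symm_symm, Equiv.symm_swap, Equiv.swap_apply_right]
  have cond_iff : ∀ f : Config n,
      {u | Reaches f s u} = (X : Set (Fin n)) ↔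
        ((∀ e : {e : Edge n // ¬(e.1.1 ∈ X ∧ e.1.2 ∈ X)}, allowed X e.1 (f e.1)) ∧
          {w | Reaches (pushCfg X φ fun e => f e.1) t w} = Set.univ) := by
    intro f
    rw [cluster_eq_iff f s X hs]
    constructor
    · rintro ⟨hcl, hall⟩
      refine ⟨fun e => (closed_iff f X).mp hcl e.1, ?_⟩
      rw [Set.eq_univ_iff_forall]
      intro w
      have hu := jmap_mem X φ w
      have h2 := (reaches_pushCfg X φ f hs hu).mp (hall _ hu)
      rw [hφs] at h2
      have h3 : φ.symm ⟨jmap X φ w, hu⟩ = w := by simp [jmap]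
      rwa [h3] at h2
    · rintro ⟨hallow, hreach⟩
      constructor
      · rw [closed_iff f X]
        intro e
        by_cases hP : (e.1.1 ∈ X ∧ e.1.2 ∈ X)
        · exact ⟨Or.inr (Or.inl hP.2), Or.inr (Or.inl hP.1)⟩
        · exact hallow ⟨e, hP⟩
      · intro u hu
        rw [Set.eq_univ_iff_forall] at hreach
        have h2 := hreach (φ.symm ⟨u, hu⟩)
        rw [← hφs] at h2
        exact (reaches_pushCfg X φ f hs hu).mpr h2
  rw [← Equiv.sum_comp (Equiv.piEquivPiSubtypeProd (fun e : Edge n => (e.1.1 ∈ X ∧ e.1.2 ∈ X))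
      (fun _ => Option Bool)).symm
    (fun f : Config n =>
      ({f : Config n | {u | Reaches f s u} = (X : Set (Fin n))}.indicator (W p) f))]
  rw [Fintype.sum_prod_type]
  have point : ∀ (f1 : InE X → Option Bool)
      (f2 : {e : Edge n // ¬(e.1.1 ∈ X ∧ e.1.2 ∈ X)} → Option Bool),
      ({f : Config n | {u | Reaches f s u} = (X : Set (Fin n))}.indicator (W p)
          ((Equiv.piEquivPiSubtypeProd (fun e : Edge n => (e.1.1 ∈ X ∧ e.1.2 ∈ X))
            (fun _ => Option Bool)).symm (f1, f2)))
        = ({f1 : InE X → Option Bool |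
              {w | Reaches (pushCfg X φ f1) t w} = Set.univ}.indicator
            (fun f1 => ∏ e : InE X, edgeWeight p (f1 e)) f1)
          * (if (∀ e, allowed X e.1 (f2 e)) then ∏ e, edgeWeight p (f2 e) else 0) := by
    intro f1 f2
    have hr1 : ∀ e : InE X,
        ((Equiv.piEquivPiSubtypeProd (fun e : Edge n => (e.1.1 ∈ X ∧ e.1.2 ∈ X))
          (fun _ => Option Bool)).symm (f1, f2)) e.1 = f1 e := fun e => by
      simp [Equiv.piEquivPiSubtypeProd_symm_apply, e.2]
    have hr2 : ∀ e : {e : Edge n // ¬(e.1.1 ∈ X ∧ e.1.2 ∈ X)},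
        ((Equiv.piEquivPiSubtypeProd (fun e : Edge n => (e.1.1 ∈ X ∧ e.1.2 ∈ X))
          (fun _ => Option Bool)).symm (f1, f2)) e.1 = f2 e := fun e => by
      simp [Equiv.piEquivPiSubtypeProd_symm_apply, e.2]
    have hcond2 := cond_iff ((Equiv.piEquivPiSubtypeProd
        (fun e : Edge n => (e.1.1 ∈ X ∧ e.1.2 ∈ X)) (fun _ => Option Bool)).symm (f1, f2))
    simp only [hr1, hr2] at hcond2
    have hW : W p ((Equiv.piEquivPiSubtypeProd (fun e : Edge n => (e.1.1 ∈ X ∧ e.1.2 ∈ X))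
          (fun _ => Option Bool)).symm (f1, f2))
        = (∏ e : InE X, edgeWeight p (f1 e))
          * ∏ e : {e : Edge n // ¬(e.1.1 ∈ X ∧ e.1.2 ∈ X)}, edgeWeight p (f2 e) := by
      rw [W, ← Fintype.prod_subtype_mul_prod_subtype (fun e : Edge n => (e.1.1 ∈ X ∧ e.1.2 ∈ X))
        (fun e => edgeWeight p ((Equiv.piEquivPiSubtypeProd
          (fun e : Edge n => (e.1.1 ∈ X ∧ e.1.2 ∈ X)) (fun _ => Option Bool)).symm (f1, f2) e))]
      congr 1
      · exact Finset.prod_congr rfl fun e _ => by rw [hr1 e]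
      · exact Finset.prod_congr rfl fun e _ => by rw [hr2 e]
    by_cases hB : {w | Reaches (pushCfg X φ f1) t w} = Set.univ <;>
      by_cases hA : ∀ e : {e : Edge n // ¬(e.1.1 ∈ X ∧ e.1.2 ∈ X)}, allowed X e.1 (f2 e)
    · rw [Set.indicator_of_mem
          (s := {f : Config n | {u | Reaches f s u} = (X : Set (Fin n))})
          (a := (Equiv.piEquivPiSubtypeProd (fun e : Edge n => (e.1.1 ∈ X ∧ e.1.2 ∈ X))
            (fun _ => Option Bool)).symm (f1, f2)) (hcond2.mpr ⟨hA, hB⟩), hW,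
        Set.indicator_of_mem
          (s := {f1 : InE X → Option Bool | {w | Reaches (pushCfg X φ f1) t w} = Set.univ})
          (a := f1) hB, if_pos hA]
    · rw [Set.indicator_of_notMem
          (s := {f : Config n | {u | Reaches f s u} = (X : Set (Fin n))})
          (a := (Equiv.piEquivPiSubtypeProd (fun e : Edge n => (e.1.1 ∈ X ∧ e.1.2 ∈ X))
            (fun _ => Option Bool)).symm (f1, f2)) (fun hm => hA (hcond2.mp hm).1),
        if_neg hA, mul_zero]
    · rw [Set.indicator_of_notMem
          (s := {f : Config n | {u | Reaches f s u} = (X : Set (Fin n))})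
          (a := (Equiv.piEquivPiSubtypeProd (fun e : Edge n => (e.1.1 ∈ X ∧ e.1.2 ∈ X))
            (fun _ => Option Bool)).symm (f1, f2)) (fun hm => hB (hcond2.mp hm).2),
        Set.indicator_of_notMem
          (s := {f1 : InE X → Option Bool | {w | Reaches (pushCfg X φ f1) t w} = Set.univ})
          (a := f1) hB, zero_mul]
    · rw [Set.indicator_of_notMem
          (s := {f : Config n | {u | Reaches f s u} = (X : Set (Fin n))})
          (a := (Equiv.piEquivPiSubtypeProd (fun e : Edge n => (e.1.1 ∈ X ∧ e.1.2 ∈ X))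
            (fun _ => Option Bool)).symm (f1, f2)) (fun hm => hB (hcond2.mp hm).2),
        Set.indicator_of_notMem
          (s := {f1 : InE X → Option Bool | {w | Reaches (pushCfg X φ f1) t w} = Set.univ})
          (a := f1) hB, zero_mul]
  rw [Finset.sum_congr rfl fun f1 _ => Finset.sum_congr rfl fun f2 _ => point f1 f2]
  rw [← Finset.sum_mul_sum]
  rw [factor1 p X φ t, factor2 p X]
  have hcompl : (Finset.univ \ X).card = n - (k + 1) := by
    rw [Finset.card_sdiff_of_subset (Finset.subset_univ X), Finset.card_univ, Fintype.card_fin, hcard]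
  rw [hcard, hcompl]

end



set_option maxHeartbeats 1600000

/-- Let `0 ≤ p ≤ 1`, `y := 1 - p/2`, and let `s, b` be distinct
vertices of `⃗G(n,p)` with `n ≥ 2`. Then
`P(s ↛ b) = ∑_{k=1}^{n-1} C(n-2,k-1) d_p(k,k) y^(k(n-k))`, where `d_p(k,k)` is the
probability in `⃗G(k,p)` that the out-cluster of a vertex is everything.
(The summation index `k` of the paper is `k + 1` below.) -/
theorem gnp_not_reach_formula
    (p : ℝ) (hp : p ∈ Set.Icc (0 : ℝ) 1)
    (n : ℕ) (hn : 2 ≤ n) (s b : Fin n) (hsb : s ≠ b)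
    (s' : (i : ℕ) → Fin (i + 1)) :
    PrGnp n p {f | ¬ Reaches f s b} =
      ∑ k ∈ Finset.range (n - 1), (Nat.choose (n - 2) k : ℝ) *
          PrGnp (k + 1) p {f | {u | Reaches f (s' k) u} = Set.univ} *
          (1 - p / 2) ^ ((k + 1) * (n - (k + 1))) := by
  classical
  have hPr : ∀ (m : ℕ) (E : Set (Config m)), PrGnp m p E = ∑ f, E.indicator (W p) f :=
    fun _ _ => rfl
  rw [hPr]
  have claim1 : ∀ f : Config n,
      ({f : Config n | ¬ Reaches f s b}.indicator (W p) f)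
        = ∑ X ∈ Finset.univ.filter (fun X : Finset (Fin n) => s ∈ X ∧ b ∉ X),
            ({f : Config n | {u | Reaches f s u} = (X : Set (Fin n))}.indicator (W p) f) := by
    intro f
    by_cases hb : Reaches f s b
    · rw [Set.indicator_of_notMem (s := {f : Config n | ¬ Reaches f s b}) (a := f)
        (not_not_intro hb)]
      symm
      apply Finset.sum_eq_zero
      intro X hX
      rw [Finset.mem_filter] at hX
      apply Set.indicator_of_notMem
        (s := {f : Config n | {u | Reaches f s u} = (X : Set (Fin n))}) (a := f)
      intro hmem
      have hbm : b ∈ {u | Reaches f s u} := hb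
      rw [hmem] at hbm
      exact hX.2.2 (Finset.mem_coe.mp hbm)
    · rw [Set.indicator_of_mem (s := {f : Config n | ¬ Reaches f s b}) (a := f) hb]
      symm
      set X0 : Finset (Fin n) := Finset.univ.filter (fun u => Reaches f s u) with hX0def
      have hcoe : (X0 : Set (Fin n)) = {u | Reaches f s u} := by
        ext u; simp [hX0def]
      have hmem0 : X0
          ∈ Finset.univ.filter (fun X : Finset (Fin n) => s ∈ X ∧ b ∉ X) := by
        rw [Finset.mem_filter]
        refine ⟨Finset.mem_univ _, ?_, ?_⟩
        · simp only [hX0def, Finset.mem_filter]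
          exact ⟨Finset.mem_univ _, Relation.ReflTransGen.refl⟩
        · simp only [hX0def, Finset.mem_filter]
          exact fun hc => hb hc.2
      have hzero : ∀ X ∈ Finset.univ.filter (fun X : Finset (Fin n) => s ∈ X ∧ b ∉ X),
          X ≠ X0 →
          ({f : Config n | {u | Reaches f s u} = (X : Set (Fin n))}.indicator (W p) f) = 0 := by
        intro X hX hne
        apply Set.indicator_of_notMem
          (s := {f : Config n | {u | Reaches f s u} = (X : Set (Fin n))}) (a := f)
        intro hmem
        exact hne (Finset.coe_injective (by rw [hcoe, ← hmem]))
      have hfin : ({f : Config n | {u | Reaches f s u} = (X0 : Set (Fin n))}.indicator (W p) f)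
          = W p f :=
        Set.indicator_of_mem
          (s := {f : Config n | {u | Reaches f s u} = (X0 : Set (Fin n))}) (a := f)
          hcoe.symm _
      rw [Finset.sum_eq_single_of_mem X0 hmem0 hzero, hfin]
  rw [Finset.sum_congr rfl fun f _ => claim1 f]
  rw [Finset.sum_comm]
  have hmaps : ∀ X ∈ Finset.univ.filter (fun X : Finset (Fin n) => s ∈ X ∧ b ∉ X),
      X.card - 1 ∈ Finset.range (n - 1) := by
    intro X hX
    rw [Finset.mem_filter] at hX
    rw [Finset.mem_range]
    have h1 : 0 < X.card := Finset.card_pos.mpr ⟨s, hX.2.1⟩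
    have h2 : X.card < n := by
      have hXne : X ≠ Finset.univ := fun huniv => hX.2.2 (by rw [huniv]; exact Finset.mem_univ b)
      have h3 := Finset.card_lt_card (Finset.ssubset_univ_iff.mpr hXne)
      simpa using h3
    omega
  rw [← Finset.sum_fiberwise_of_maps_to hmaps
    (fun X => ∑ f : Config n,
      ({f : Config n | {u | Reaches f s u} = (X : Set (Fin n))}.indicator (W p) f))]
  apply Finset.sum_congr rfl
  intro k hk
  have hfib : ∀ X ∈ (Finset.univ.filter fun X : Finset (Fin n) => s ∈ X ∧ b ∉ X).filter
      (fun X => X.card - 1 = k), X.card = k + 1 := by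
    intro X hX
    rw [Finset.mem_filter, Finset.mem_filter] at hX
    have h1 : 0 < X.card := Finset.card_pos.mpr ⟨s, hX.1.2.1⟩
    omega
  rw [Finset.sum_congr rfl (fun X hX => cluster_sum p X s
    (by rw [Finset.mem_filter, Finset.mem_filter] at hX; exact hX.1.2.1) (hfib X hX) (s' k))]
  rw [Finset.sum_const]
  have hcount : ((Finset.univ.filter fun X : Finset (Fin n) => s ∈ X ∧ b ∉ X).filter
      (fun X => X.card - 1 = k)).card = (n - 2).choose k := by
    rw [show ((Finset.univ.filter fun X : Finset (Fin n) => s ∈ X ∧ b ∉ X).filter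
        (fun X => X.card - 1 = k))
        = ((Finset.univ.filter fun X : Finset (Fin n) => s ∈ X ∧ b ∉ X).filter
        (fun X => X.card = k + 1)) from Finset.filter_congr ?_]
    · exact count_X s b hsb k
    · intro X hX
      rw [Finset.mem_filter] at hX
      have h1 : 0 < X.card := Finset.card_pos.mpr ⟨s, hX.2.1⟩
      constructor
      · intro h; omega
      · intro h; omega
  rw [hcount, nsmul_eq_mul, hPr]
  ring
end
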